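/- arXiv:2205.08801 — 3 statements merged into one kernel-verified Lean document; each statement's English description precedes it below -/
import Mathlib

section
/- For q ≥ 2 and any bipartite density matrix ρ_AB with reduced states ρ_A and ρ_B, the inequality F_q(ρ_AB) ≤ F_q(ρ_A) + F_q(ρ_B) holds, where F_q(ρ) = 1 - Tr(ρ^q). -/
open scoped BigOperators ComplexOrder

/-- `Tr(ρ^q)` for a Hermitian matrix `ρ`, defined via its spectral decomposition. -/
noncomputable def traceRpow {m : Type*} [Fintype m] [DecidableEq m]
    (ρ : Matrix m m ℂ) (h : ρ.IsHermitian) (q : ℝ) : ℝ :=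
  ∑ i, (h.eigenvalues i) ^ q

/-- `F_q(ρ) = 1 - Tr(ρ^q)`. -/
noncomputable def FqEnt {m : Type*} [Fintype m] [DecidableEq m]
    (ρ : Matrix m m ℂ) (h : ρ.IsHermitian) (q : ℝ) : ℝ :=
  1 - traceRpow ρ h q

open Finset Matrix Kronecker


lemma rpow_le_self_of_le_one {x q : ℝ} (hx : 0 ≤ x) (hx1 : x ≤ 1) (hq : 1 ≤ q) : x ^ q ≤ x := by
  rcases eq_or_lt_of_le hx with h | h
  · rw [← h, Real.zero_rpow (by linarith)]
  · calc x ^ q ≤ x ^ (1:ℝ) := Real.rpow_le_rpow_of_exponent_ge h hx1 hq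
      _ = x := Real.rpow_one x

lemma classical_tsallis {A B : Type*} [Fintype A] [Fintype B]
    (q : ℝ) (hq : 1 ≤ q) (p : A → B → ℝ) (hp : ∀ a b, 0 ≤ p a b)
    (μ : A → ℝ) (ν : B → ℝ)
    (hμ : ∀ a, μ a = ∑ b, p a b) (hν : ∀ b, ν b = ∑ a, p a b)
    (hsum : ∑ a, μ a = 1) :
    (∑ a, μ a ^ q) + (∑ b, ν b ^ q) ≤ 1 + ∑ a, ∑ b, p a b ^ q := by
  have hq0 : q ≠ 0 := by positivity
  have hμ0 : ∀ a, 0 ≤ μ a := fun a => (hμ a) ▸ Finset.sum_nonneg (fun b _ => hp a b)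
  have hμ1 : ∀ a, μ a ≤ 1 := by
    intro a
    rw [← hsum]
    exact Finset.single_le_sum (fun a _ => hμ0 a) (mem_univ a)
  set r : A → B → ℝ := fun a b => p a b / μ a with hr
  have hpz : ∀ a, μ a = 0 → ∀ b, p a b = 0 := by
    intro a ha b
    have := (Finset.sum_eq_zero_iff_of_nonneg (fun b _ => hp a b)).mp ((hμ a).symm.trans ha)
    exact this b (mem_univ b)
  have hr0 : ∀ a b, 0 ≤ r a b := fun a b => div_nonneg (hp a b) (hμ0 a)
  have hpr : ∀ a b, p a b = μ a * r a b := by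
    intro a b
    rcases eq_or_lt_of_le (hμ0 a) with h | h
    · rw [hpz a h.symm b, ← h]; ring
    · simp only [hr]; rw [mul_div_assoc', mul_div_cancel_left₀ _ (ne_of_gt h)]
  have hple : ∀ a b, p a b ≤ μ a := by
    intro a b
    rw [hμ a]
    exact Finset.single_le_sum (fun b _ => hp a b) (mem_univ b)
  have hr1 : ∀ a b, r a b ≤ 1 := by
    intro a b
    rcases eq_or_lt_of_le (hμ0 a) with h | h
    · simp [hr, ← h, hpz a h.symm b]
    · exact (div_le_one h).mpr (hple a b)
  set R : A → ℝ := fun a => ∑ b, r a b ^ q with hR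
  have hR0 : ∀ a, 0 ≤ R a := fun a =>
    Finset.sum_nonneg (fun b _ => Real.rpow_nonneg (hr0 a b) q)
  have hrsum : ∀ a, 0 < μ a → ∑ b, r a b = 1 := by
    intro a ha
    rw [hr]
    simp only [← Finset.sum_div, ← hμ a]
    exact div_self (ne_of_gt ha)
  have hR1 : ∀ a, R a ≤ 1 := by
    intro a
    rcases eq_or_lt_of_le (hμ0 a) with h | h
    · have : ∀ b, r a b = 0 := fun b => by simp [hr, ← h, hpz a h.symm b]
      simp [hR, this, Real.zero_rpow hq0]
    · calc R a ≤ ∑ b, r a b :=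
            Finset.sum_le_sum (fun b _ => rpow_le_self_of_le_one (hr0 a b) (hr1 a b) hq)
        _ = 1 := hrsum a h
  have hS : ∀ a, ∑ b, p a b ^ q = μ a ^ q * R a := by
    intro a
    rw [hR, Finset.mul_sum]
    refine Finset.sum_congr rfl (fun b _ => ?_)
    rw [hpr a b, Real.mul_rpow (hμ0 a) (hr0 a b)]
  have hμq : ∀ a, μ a ^ q ≤ μ a := fun a => rpow_le_self_of_le_one (hμ0 a) (hμ1 a) hq
  have step3 : ∑ b, ν b ^ q ≤ ∑ a, μ a * R a := by
    have key : ∀ b, ν b ^ q ≤ ∑ a, μ a * r a b ^ q := by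
      intro b
      have := (convexOn_rpow hq).map_sum_le (t := univ) (w := fun a => μ a)
        (p := fun a => r a b) (fun a _ => hμ0 a) hsum (fun a _ => hr0 a b)
      calc ν b ^ q = (∑ a, μ a • r a b) ^ q := by
            rw [hν b]; congr 1; exact Finset.sum_congr rfl fun a _ => by
              rw [smul_eq_mul, ← hpr a b]
        _ ≤ ∑ a, μ a * r a b ^ q := this
    calc ∑ b, ν b ^ q ≤ ∑ b, ∑ a, μ a * r a b ^ q := Finset.sum_le_sum fun b _ => key b
      _ = ∑ a, μ a * R a := by
          rw [Finset.sum_comm]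
          exact Finset.sum_congr rfl fun a _ => by rw [hR, Finset.mul_sum]
  have final : ∑ a, (μ a ^ q + μ a * R a) ≤ ∑ a, (μ a + μ a ^ q * R a) := by
    refine Finset.sum_le_sum fun a _ => ?_
    nlinarith [hμq a, hR1 a, hR0 a, mul_nonneg (sub_nonneg.mpr (hμq a)) (sub_nonneg.mpr (hR1 a))]
  calc (∑ a, μ a ^ q) + (∑ b, ν b ^ q) ≤ (∑ a, μ a ^ q) + ∑ a, μ a * R a := by linarith [step3]
    _ = ∑ a, (μ a ^ q + μ a * R a) := by rw [Finset.sum_add_distrib]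
    _ ≤ ∑ a, (μ a + μ a ^ q * R a) := final
    _ = 1 + ∑ a, ∑ b, p a b ^ q := by
        rw [Finset.sum_add_distrib, hsum]
        congr 1
        exact Finset.sum_congr rfl fun a _ => (hS a).symm


lemma partial_diag_sum {A B : Type*} [Fintype A] [Fintype B] [DecidableEq B]
    (ρAB : Matrix (A × B) (A × B) ℂ) (ρA : Matrix A A ℂ)
    (hρA : ∀ a a', ρA a a' = ∑ b, ρAB (a, b) (a', b))
    (U : Matrix A A ℂ) (V : Matrix B B ℂ) (hV : V * Vᴴ = 1)
    (N : Matrix (A × B) (A × B) ℂ) (hN : ∀ x y : A × B, N x y = U x.1 y.1 * V x.2 y.2)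
    (a : A) : ∑ b, (Nᴴ * ρAB * N) (a, b) (a, b) = (Uᴴ * ρA * U) a a := by
  have hVd : ∀ b₁ b₂ : B, (∑ b, V b₂ b * star (V b₁ b)) = if b₂ = b₁ then 1 else 0 := by
    intro b₁ b₂
    have := congrFun (congrFun hV b₂) b₁
    simpa [Matrix.mul_apply, Matrix.conjTranspose_apply, Matrix.one_apply] using this
  have expand : ∀ x : A × B, (Nᴴ * ρAB * N) x x
      = ∑ w, ∑ z, star (N w x) * ρAB w z * N z x := by
    intro x
    rw [Matrix.mul_apply]
    simp only [Matrix.mul_apply, Matrix.conjTranspose_apply, Finset.sum_mul]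
    rw [Finset.sum_comm]
  calc ∑ b, (Nᴴ * ρAB * N) (a, b) (a, b)
      = ∑ b, ∑ w, ∑ z, star (N w (a, b)) * ρAB w z * N z (a, b) := by
        exact Finset.sum_congr rfl fun b _ => expand (a, b)
    _ = ∑ w, ∑ z, ∑ b, star (N w (a, b)) * ρAB w z * N z (a, b) := by
        rw [Finset.sum_comm]
        exact Finset.sum_congr rfl fun w _ => Finset.sum_comm
    _ = ∑ w, ∑ z, (star (U w.1 a) * ρAB w z * U z.1 a) * (∑ b, V z.2 b * star (V w.2 b)) := by
        refine Finset.sum_congr rfl fun w _ => Finset.sum_congr rfl fun z _ => ?_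
        rw [Finset.mul_sum]
        refine Finset.sum_congr rfl fun b _ => ?_
        simp only [hN, star_mul']
        ring
    _ = ∑ w, ∑ z, (star (U w.1 a) * ρAB w z * U z.1 a) * (if z.2 = w.2 then 1 else 0) := by
        refine Finset.sum_congr rfl fun w _ => Finset.sum_congr rfl fun z _ => ?_
        rw [hVd]
    _ = ∑ w : A × B, ∑ a₂, star (U w.1 a) * ρAB w (a₂, w.2) * U a₂ a := by
        refine Finset.sum_congr rfl fun w _ => ?_
        rw [Fintype.sum_prod_type]
        refine Finset.sum_congr rfl fun a₂ _ => ?_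
        simp
    _ = ∑ a₁, ∑ b₁, ∑ a₂, star (U a₁ a) * ρAB (a₁, b₁) (a₂, b₁) * U a₂ a := by
        rw [Fintype.sum_prod_type]
    _ = ∑ a₂, ∑ a₁, ∑ b₁, star (U a₁ a) * ρAB (a₁, b₁) (a₂, b₁) * U a₂ a := by
        rw [show (∑ a₁, ∑ b₁, ∑ a₂, star (U a₁ a) * ρAB (a₁, b₁) (a₂, b₁) * U a₂ a)
            = ∑ a₁, ∑ a₂, ∑ b₁, star (U a₁ a) * ρAB (a₁, b₁) (a₂, b₁) * U a₂ a from
          Finset.sum_congr rfl fun a₁ _ => Finset.sum_comm]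
        exact Finset.sum_comm
    _ = (Uᴴ * ρA * U) a a := by
        rw [Matrix.mul_apply]
        simp only [Matrix.mul_apply, Matrix.conjTranspose_apply, hρA, Finset.sum_mul,
          Finset.mul_sum]

theorem stmt2_key {A B : Type*} [Fintype A] [DecidableEq A] [Fintype B] [DecidableEq B]
    (q : ℝ) (hq : 2 ≤ q)
    (ρAB : Matrix (A × B) (A × B) ℂ) (hρ : ρAB.PosSemidef) (htr : ρAB.trace = 1)
    (ρA : Matrix A A ℂ) (hρA : ∀ a a', ρA a a' = ∑ b, ρAB (a, b) (a', b))
    (ρB : Matrix B B ℂ) (hρB : ∀ b b', ρB b b' = ∑ a, ρAB (a, b) (a, b'))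
    (hA : ρA.IsHermitian) (hB : ρB.IsHermitian) :
    (∑ a, hA.eigenvalues a ^ q) + (∑ b, hB.eigenvalues b ^ q)
      ≤ 1 + ∑ k, hρ.1.eigenvalues k ^ q := by
  have hq1 : (1:ℝ) ≤ q := by linarith
  set U : Matrix A A ℂ := (hA.eigenvectorUnitary : Matrix A A ℂ) with hUdef
  set V : Matrix B B ℂ := (hB.eigenvectorUnitary : Matrix B B ℂ) with hVdef
  set W : Matrix (A × B) (A × B) ℂ :=
    (hρ.1.eigenvectorUnitary : Matrix (A × B) (A × B) ℂ) with hWdef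
  have hU : U * Uᴴ = 1 := by
    rw [hUdef, ← Matrix.star_eq_conjTranspose]
    exact Matrix.mem_unitaryGroup_iff.mp hA.eigenvectorUnitary.2
  have hU' : Uᴴ * U = 1 := by
    rw [hUdef, ← Matrix.star_eq_conjTranspose]
    exact Matrix.mem_unitaryGroup_iff'.mp hA.eigenvectorUnitary.2
  have hV : V * Vᴴ = 1 := by
    rw [hVdef, ← Matrix.star_eq_conjTranspose]
    exact Matrix.mem_unitaryGroup_iff.mp hB.eigenvectorUnitary.2
  have hV' : Vᴴ * V = 1 := by
    rw [hVdef, ← Matrix.star_eq_conjTranspose]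
    exact Matrix.mem_unitaryGroup_iff'.mp hB.eigenvectorUnitary.2
  have hW : W * Wᴴ = 1 := by
    rw [hWdef, ← Matrix.star_eq_conjTranspose]
    exact Matrix.mem_unitaryGroup_iff.mp hρ.1.eigenvectorUnitary.2
  have hW' : Wᴴ * W = 1 := by
    rw [hWdef, ← Matrix.star_eq_conjTranspose]
    exact Matrix.mem_unitaryGroup_iff'.mp hρ.1.eigenvectorUnitary.2
  set μ : A → ℝ := hA.eigenvalues with hμdef
  set ν : B → ℝ := hB.eigenvalues with hνdef
  set lam : (A × B) → ℝ := hρ.1.eigenvalues with hlamdef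
  have hlam0 : ∀ k, 0 ≤ lam k := fun k => hρ.eigenvalues_nonneg k
  set D : Matrix (A × B) (A × B) ℂ := diagonal (fun k => ((lam k : ℝ) : ℂ)) with hDdef
  have hspec : ρAB = W * D * Wᴴ := by
    rw [hWdef, hDdef, ← Matrix.star_eq_conjTranspose]
    exact hρ.1.spectral_theorem
  set N : Matrix (A × B) (A × B) ℂ := U ⊗ₖ V with hNdef
  have hN : ∀ x y : A × B, N x y = U x.1 y.1 * V x.2 y.2 := fun x y => rfl
  have hNH : Nᴴ = Uᴴ ⊗ₖ Vᴴ := by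
    ext x y
    simp only [hNdef, Matrix.conjTranspose_apply, Matrix.kroneckerMap_apply, star_mul',
      mul_comm]
  have hNN' : Nᴴ * N = 1 := by
    rw [hNH, hNdef, ← Matrix.mul_kronecker_mul, hU', hV', Matrix.one_kronecker_one]
  have hNN : N * Nᴴ = 1 := by
    rw [hNH, hNdef, ← Matrix.mul_kronecker_mul, hU, hV, Matrix.one_kronecker_one]
  set S : Matrix (A × B) (A × B) ℂ := Wᴴ * N with hSdef
  have hSH : Sᴴ = Nᴴ * W := by
    rw [hSdef, Matrix.conjTranspose_mul, Matrix.conjTranspose_conjTranspose]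
  have hSS : Sᴴ * S = 1 := by
    rw [hSH, hSdef, Matrix.mul_assoc, ← Matrix.mul_assoc W, hW, Matrix.one_mul, hNN']
  have hSS' : S * Sᴴ = 1 := by
    rw [hSH, hSdef, Matrix.mul_assoc, ← Matrix.mul_assoc N, hNN, Matrix.one_mul, hW']
  have hMS : Nᴴ * ρAB * N = Sᴴ * D * S := by
    rw [hSH, hSdef, hspec]
    simp only [Matrix.mul_assoc]
  set c : (A × B) → (A × B) → ℝ := fun k x => Complex.normSq (S k x) with hcdef
  have hc0 : ∀ k x, 0 ≤ c k x := fun k x => Complex.normSq_nonneg _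
  -- diagonal entries of conjugated matrix
  have hdiag : ∀ x : A × B, (Nᴴ * ρAB * N) x x = ((∑ k, lam k * c k x : ℝ) : ℂ) := by
    intro x
    rw [hMS, Matrix.mul_apply, Complex.ofReal_sum]
    refine Finset.sum_congr rfl fun k _ => ?_
    rw [Matrix.mul_diagonal]
    rw [show (Sᴴ) x k = star (S k x) from rfl]
    calc star (S k x) * ((lam k : ℝ) : ℂ) * S k x
        = ((lam k : ℝ) : ℂ) * (S k x * star (S k x)) := by ring
      _ = ((lam k : ℝ) : ℂ) * ((Complex.normSq (S k x) : ℝ) : ℂ) := by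
          rw [Complex.star_def, Complex.mul_conj]
      _ = ((lam k * c k x : ℝ) : ℂ) := by rw [hcdef]; push_cast; ring
  set p : A → B → ℝ := fun a b => ∑ k, lam k * c k (a, b) with hpdef
  have hps : ∀ a b, p a b = ∑ k, lam k * c k (a, b) := fun a b => rfl
  have hp0 : ∀ a b, 0 ≤ p a b :=
    fun a b => Finset.sum_nonneg fun k _ => mul_nonneg (hlam0 k) (hc0 k (a, b))
  -- row and column sums of c
  have hcrow : ∀ x : A × B, ∑ k, c k x = 1 := by
    intro x
    have h1 : (Sᴴ * S) x x = 1 := by rw [hSS, Matrix.one_apply_eq]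
    rw [Matrix.mul_apply] at h1
    have h2 : ∀ k, (Sᴴ) x k * S k x = ((c k x : ℝ) : ℂ) := by
      intro k
      rw [show (Sᴴ) x k = star (S k x) from rfl, mul_comm, Complex.star_def,
        Complex.mul_conj]
    rw [Finset.sum_congr rfl fun k _ => h2 k] at h1
    exact_mod_cast h1
  have hccol : ∀ k : A × B, ∑ x, c k x = 1 := by
    intro k
    have h1 : (S * Sᴴ) k k = 1 := by rw [hSS', Matrix.one_apply_eq]
    rw [Matrix.mul_apply] at h1
    have h2 : ∀ x, S k x * (Sᴴ) x k = ((c k x : ℝ) : ℂ) := by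
      intro x
      rw [show (Sᴴ) x k = star (S k x) from rfl, Complex.star_def, Complex.mul_conj]
    rw [Finset.sum_congr rfl fun x _ => h2 x] at h1
    exact_mod_cast h1
  -- marginal A
  have hQ1 : ∀ a, ∑ b, p a b = μ a := by
    intro a
    have h1 := partial_diag_sum ρAB ρA hρA U V hV N hN a
    have h2 : (Uᴴ * ρA * U) a a = ((μ a : ℝ) : ℂ) := by
      have hd : Uᴴ * ρA * U = diagonal (RCLike.ofReal ∘ μ) := by
        rw [hUdef, ← Matrix.star_eq_conjTranspose]
        have := hA.conjStarAlgAut_star_eigenvectorUnitary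
        rw [Unitary.conjStarAlgAut_star_apply] at this
        exact this
      rw [hd, Matrix.diagonal_apply_eq]
      rfl
    have h3 : (∑ b, (Nᴴ * ρAB * N) (a, b) (a, b)) = ((∑ b, p a b : ℝ) : ℂ) := by
      rw [Complex.ofReal_sum]
      exact Finset.sum_congr rfl fun b _ => hdiag (a, b)
    have h4 := h3.symm.trans (h1.trans h2)
    exact_mod_cast h4
  -- marginal B (via swapping the factors)
  have hQ2 : ∀ b, ∑ a, p a b = ν b := by
    intro b
    set e : B × A ≃ A × B := Equiv.prodComm B A with hedef
    have hsub : ((N.submatrix ⇑e ⇑e)ᴴ * (ρAB.submatrix ⇑e ⇑e) * (N.submatrix ⇑e ⇑e))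
        = (Nᴴ * ρAB * N).submatrix ⇑e ⇑e := by
      rw [Matrix.conjTranspose_submatrix, Matrix.submatrix_mul_equiv,
        Matrix.submatrix_mul_equiv]
    have h1 := partial_diag_sum (ρAB.submatrix ⇑e ⇑e) ρB
      (fun b b' => by rw [hρB b b']; rfl) V U hU (N.submatrix ⇑e ⇑e)
      (fun x y => by
        simp only [Matrix.submatrix_apply]
        rw [hN]
        exact mul_comm _ _) b
    rw [hsub] at h1
    have h2 : (Vᴴ * ρB * V) b b = ((ν b : ℝ) : ℂ) := by
      have hd : Vᴴ * ρB * V = diagonal (RCLike.ofReal ∘ ν) := by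
        rw [hVdef, ← Matrix.star_eq_conjTranspose]
        have := hB.conjStarAlgAut_star_eigenvectorUnitary
        rw [Unitary.conjStarAlgAut_star_apply] at this
        exact this
      rw [hd, Matrix.diagonal_apply_eq]
      rfl
    have h3 : (∑ a, ((Nᴴ * ρAB * N).submatrix ⇑e ⇑e) (b, a) (b, a))
        = ((∑ a, p a b : ℝ) : ℂ) := by
      rw [Complex.ofReal_sum]
      refine Finset.sum_congr rfl fun a _ => ?_
      rw [Matrix.submatrix_apply]
      exact hdiag (a, b)
    have h4 := h3.symm.trans (h1.trans h2)
    exact_mod_cast h4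
  -- eigenvalues of ρAB sum to one
  have hlam1 : ∑ k, lam k = 1 := by
    have h1 : ρAB.trace = ((∑ k, lam k : ℝ) : ℂ) := by
      rw [hspec, Matrix.trace_mul_cycle, hW', Matrix.one_mul, hDdef,
        Matrix.trace_diagonal, Complex.ofReal_sum]
    rw [htr] at h1
    exact_mod_cast h1.symm
  -- eigenvalues of ρA sum to one
  have hsum : ∑ a, μ a = 1 := by
    have h1 : ∑ a, μ a = ∑ a, ∑ b, p a b := Finset.sum_congr rfl fun a _ => (hQ1 a).symm
    rw [h1]
    calc ∑ a, ∑ b, p a b = ∑ x : A × B, ∑ k, lam k * c k x := by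
          simp only [hps]
          exact (Fintype.sum_prod_type (f := fun x : A × B => ∑ k, lam k * c k x)).symm
      _ = ∑ k, lam k * (∑ x : A × B, c k x) := by
          rw [Finset.sum_comm]
          exact Finset.sum_congr rfl fun k _ => by rw [Finset.mul_sum]
      _ = ∑ k, lam k := by
          refine Finset.sum_congr rfl fun k _ => ?_
          rw [hccol k, mul_one]
      _ = 1 := hlam1
  -- Jensen / Schur-Horn step
  have hjensen : ∑ a, ∑ b, p a b ^ q ≤ ∑ k, lam k ^ q := by
    have key : ∀ x : A × B, (∑ k, lam k * c k x) ^ q ≤ ∑ k, c k x * lam k ^ q := by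
      intro x
      have h := (convexOn_rpow hq1).map_sum_le (t := univ) (w := fun k => c k x)
        (p := lam) (fun k _ => hc0 k x) (hcrow x) (fun k _ => hlam0 k)
      calc (∑ k, lam k * c k x) ^ q = (∑ k, c k x • lam k) ^ q := by
            congr 1
            exact Finset.sum_congr rfl fun k _ => by rw [smul_eq_mul, mul_comm]
        _ ≤ ∑ k, c k x * lam k ^ q := h
    calc ∑ a, ∑ b, p a b ^ q = ∑ x : A × B, (∑ k, lam k * c k x) ^ q := by
          simp only [hps]
          exact (Fintype.sum_prod_type
            (f := fun x : A × B => (∑ k, lam k * c k x) ^ q)).symm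
      _ ≤ ∑ x : A × B, ∑ k, c k x * lam k ^ q := Finset.sum_le_sum fun x _ => key x
      _ = ∑ k, lam k ^ q := by
          rw [Finset.sum_comm]
          refine Finset.sum_congr rfl fun k _ => ?_
          rw [← Finset.sum_mul, hccol k, one_mul]
  have hcl := classical_tsallis q hq1 p hp0 μ ν (fun a => (hQ1 a).symm)
    (fun b => (hQ2 b).symm) hsum
  linarith [hjensen, hcl]

theorem stmt2 {A B : Type*} [Fintype A] [DecidableEq A] [Fintype B] [DecidableEq B]
    (q : ℝ) (hq : 2 ≤ q)
    (ρAB : Matrix (A × B) (A × B) ℂ) (hρ : ρAB.PosSemidef) (htr : ρAB.trace = 1)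
    (ρA : Matrix A A ℂ) (hρA : ∀ a a', ρA a a' = ∑ b, ρAB (a, b) (a', b))
    (ρB : Matrix B B ℂ) (hρB : ∀ b b', ρB b b' = ∑ a, ρAB (a, b) (a, b'))
    (hA : ρA.IsHermitian) (hB : ρB.IsHermitian) :
    FqEnt ρAB hρ.1 q ≤ FqEnt ρA hA q + FqEnt ρB hB q := by
  have key := stmt2_key q hq ρAB hρ htr ρA hρA ρB hρB hA hB
  simp only [FqEnt, traceRpow]
  linarith
end

section
/- For any three-qudit pure state |ψ⟩ and q ≥ 2, the three marginal q-concurrences satisfy the triangle inequalities |C_q^{j|ik} - C_q^{k|ij}| ≤ C_q^{i|jk} ≤ C_q^{j|ik} + C_q^{k|ij} for all permutations {i,j,k} of {1,2,3}; in particular the three quantities can form the side lengths of a (possibly degenerate) triangle. -/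
open scoped BigOperators
open Finset

/-- `x^r ≤ x` for `x ∈ [0,1]`, `r ≥ 1`. -/
lemma rpow_le_self' {x r : ℝ} (hx0 : 0 ≤ x) (hx1 : x ≤ 1) (hr : 1 ≤ r) :
    x ^ r ≤ x := by
  rcases eq_or_lt_of_le hx0 with h | h
  · rw [← h, Real.zero_rpow (by linarith)]
  · calc x ^ r ≤ x ^ (1:ℝ) := Real.rpow_le_rpow_of_exponent_ge h hx1 hr
    _ = x := Real.rpow_one x

/-- Convexity increment lemma: for `0 ≤ v ≤ u`, `0 ≤ t`, `r ≥ 1`: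
`(v+t)^r - v^r ≤ (u+t)^r - u^r`. -/
lemma rpow_increment {v u t r : ℝ} (hv : 0 ≤ v) (hvu : v ≤ u) (ht : 0 ≤ t)
    (hr : 1 ≤ r) : (v + t) ^ r - v ^ r ≤ (u + t) ^ r - u ^ r := by
  have hcv := convexOn_rpow hr
  rcases eq_or_lt_of_le (show (0:ℝ) ≤ u + t - v by linarith) with h0 | hLpos
  · have hu : u = v := by nlinarith
    have htz : t = 0 := by nlinarith
    simp [hu, htz]
  · have hL0 : u + t - v ≠ 0 := hLpos.ne'
    set θ : ℝ := (u - v) / (u + t - v) with hθ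
    have hθ0 : 0 ≤ θ := div_nonneg (by linarith) hLpos.le
    have hθ1 : 0 ≤ 1 - θ := by
      rw [hθ, sub_nonneg, div_le_one hLpos]; linarith
    have e1 : θ * v + (1 - θ) * (u + t) = v + t := by
      rw [hθ]; field_simp; ring
    have e2 : (1 - θ) * v + θ * (u + t) = u := by
      rw [hθ]; field_simp; ring
    have hmem1 : v ∈ Set.Ici (0:ℝ) := hv
    have hmem2 : u + t ∈ Set.Ici (0:ℝ) := by simp; linarith
    have h1 := hcv.2 hmem1 hmem2 hθ0 hθ1 (by ring)
    have h2 := hcv.2 hmem1 hmem2 hθ1 hθ0 (by ring)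
    simp only [smul_eq_mul] at h1 h2
    rw [e1] at h1
    rw [e2] at h2
    linarith

/-- Key scalar inequality: `a^r + b^r ≤ 1 + c^r` for `a, b ∈ [0,1]`, `c ≥ 0`,
`a + b - 1 ≤ c`, `r ≥ 1`. -/
lemma rpow_triangle_scalar {a b c r : ℝ} (ha0 : 0 ≤ a) (ha1 : a ≤ 1)
    (hb0 : 0 ≤ b) (hb1 : b ≤ 1) (hc : 0 ≤ c) (habc : a + b - 1 ≤ c)
    (hr : 1 ≤ r) : a ^ r + b ^ r ≤ 1 + c ^ r := by
  rcases le_or_gt (a + b) 1 with h | h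
  · have h1 : a ^ r ≤ a := rpow_le_self' ha0 ha1 hr
    have h2 : b ^ r ≤ b := rpow_le_self' hb0 hb1 hr
    have h3 : 0 ≤ c ^ r := Real.rpow_nonneg hc r
    linarith
  · have hd0 : 0 ≤ a + b - 1 := by linarith
    -- a^r - (a+b-1)^r ≤ 1 - b^r via increments with v = a+b-1, u = b, t = 1-b
    have key : a ^ r - (a + b - 1) ^ r ≤ 1 ^ r - b ^ r := by
      have := rpow_increment hd0 (show a + b - 1 ≤ b by linarith)
        (show (0:ℝ) ≤ 1 - b by linarith) hr
      have e1 : a + b - 1 + (1 - b) = a := by ring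
      have e2 : b + (1 - b) = 1 := by ring
      rw [e1, e2] at this
      linarith
    have hmono : (a + b - 1) ^ r ≤ c ^ r := Real.rpow_le_rpow hd0 habc (by linarith)
    rw [Real.one_rpow] at key
    linarith

/-- `x^q = x * x^(q-1)` for `x ≥ 0`, `q ≥ 1`. -/
lemma rpow_eq_mul_rpow_sub_one {x q : ℝ} (hx : 0 ≤ x) (hq : 1 ≤ q) :
    x ^ q = x * x ^ (q - 1) := by
  rcases eq_or_lt_of_le hx with h | h
  · rw [← h, Real.zero_rpow (by linarith), zero_mul]
  · rw [show q = 1 + (q - 1) by ring, Real.rpow_add h, Real.rpow_one,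
      show 1 + (q - 1) - 1 = q - 1 by ring]

/-- Jensen-type: `(∑ w λ)^q ≤ ∑ w λ^q` for nonneg `w` with `∑ w ≤ 1`, nonneg `λ`, `q ≥ 1`. -/
lemma jensen_rpow {ι : Type*} [Fintype ι] (w lam : ι → ℝ) (hw : ∀ z, 0 ≤ w z)
    (hlam : ∀ z, 0 ≤ lam z) (hT : ∑ z, w z ≤ 1) {q : ℝ} (hq : 1 ≤ q) :
    (∑ z, w z * lam z) ^ q ≤ ∑ z, w z * lam z ^ q := by
  set T : ℝ := ∑ z, w z with hTdef
  have hT0 : 0 ≤ T := Finset.sum_nonneg fun z _ => hw z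
  rcases eq_or_lt_of_le hT0 with h0 | hTpos
  · have hz : ∀ z ∈ Finset.univ, w z = 0 := by
      intro z _
      have := Finset.sum_eq_zero_iff_of_nonneg (fun z _ => hw z) |>.mp h0.symm
      exact this z (Finset.mem_univ z)
    have e : (∑ z, w z * lam z) = 0 := Finset.sum_eq_zero fun z hzin => by
      rw [hz z hzin, zero_mul]
    rw [e, Real.zero_rpow (by linarith)]
    exact Finset.sum_nonneg fun z _ => mul_nonneg (hw z) (Real.rpow_nonneg (hlam z) q)
  · -- normalize
    have hjen := (convexOn_rpow hq).map_sum_le (t := Finset.univ)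
      (w := fun z => w z / T) (p := lam)
      (fun z _ => div_nonneg (hw z) hT0)
      (by rw [← Finset.sum_div]; field_simp; exact hTdef.symm)
      (fun z _ => hlam z)
    simp only [smul_eq_mul] at hjen
    have e1 : ∑ z, w z / T * lam z = (∑ z, w z * lam z) / T := by
      rw [Finset.sum_div]; congr 1; ext z; ring
    rw [e1] at hjen
    have hS0 : 0 ≤ ∑ z, w z * lam z :=
      Finset.sum_nonneg fun z _ => mul_nonneg (hw z) (hlam z)
    have hdiv : ((∑ z, w z * lam z) / T) ^ q = (∑ z, w z * lam z) ^ q / T ^ q := by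
      rw [Real.div_rpow hS0 hT0]
    rw [hdiv] at hjen
    have e2 : ∑ z, w z / T * lam z ^ q = (∑ z, w z * lam z ^ q) / T := by
      rw [Finset.sum_div]; congr 1; ext z; ring
    rw [e2] at hjen
    have hTq : 0 < T ^ q := Real.rpow_pos_of_pos hTpos q
    rw [div_le_div_iff₀ hTq hTpos] at hjen
    have hTq1 : T ^ q ≤ T := rpow_le_self' hT0 hT (by linarith)
    -- (∑ wλ)^q * T ≤ (∑ wλ^q) * T^q ≤ (∑ wλ^q) * T
    have hR0 : 0 ≤ ∑ z, w z * lam z ^ q :=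
      Finset.sum_nonneg fun z _ => mul_nonneg (hw z) (Real.rpow_nonneg (hlam z) q)
    nlinarith [mul_le_mul_of_nonneg_left hTq1 hR0]

section
variable {X Y : Type*} [Fintype X] [Fintype Y] [DecidableEq X] [DecidableEq Y]

/-- Classical subadditivity of Tsallis-type sums, `q ≥ 2`. -/
lemma classical_subadd (P : X → Y → ℝ) (hP : ∀ x y, 0 ≤ P x y)
    (hsum : ∑ x, ∑ y, P x y = 1) {q : ℝ} (hq : 2 ≤ q)
    (hrls : ∀ {x r : ℝ}, 0 ≤ x → x ≤ 1 → 1 ≤ r → x ^ r ≤ x)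
    (hts : ∀ {a b c r : ℝ}, 0 ≤ a → a ≤ 1 → 0 ≤ b → b ≤ 1 → 0 ≤ c →
      a + b - 1 ≤ c → 1 ≤ r → a ^ r + b ^ r ≤ 1 + c ^ r)
    (hpow : ∀ {x q' : ℝ}, 0 ≤ x → 1 ≤ q' → x ^ q' = x * x ^ (q' - 1)) :
    (∑ x, (∑ y, P x y) ^ q) + (∑ y, (∑ x, P x y) ^ q)
      ≤ 1 + ∑ x, ∑ y, (P x y) ^ q := by
  set a : X → ℝ := fun x => ∑ y, P x y with ha
  set b : Y → ℝ := fun y => ∑ x, P x y with hb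
  have hq1 : (1:ℝ) ≤ q := by linarith
  have hr1 : (1:ℝ) ≤ q - 1 := by linarith
  have ha0 : ∀ x, 0 ≤ a x := fun x => Finset.sum_nonneg fun y _ => hP x y
  have hb0 : ∀ y, 0 ≤ b y := fun y => Finset.sum_nonneg fun x _ => hP x y
  have ha1 : ∀ x, a x ≤ 1 := by
    intro x
    calc a x ≤ ∑ x', a x' :=
          Finset.single_le_sum (fun x' _ => ha0 x') (Finset.mem_univ x)
      _ = 1 := hsum
  have hb1 : ∀ y, b y ≤ 1 := by
    intro y
    have : ∑ y', b y' = 1 := by rw [hb]; rw [Finset.sum_comm]; exact hsum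
    calc b y ≤ ∑ y', b y' :=
          Finset.single_le_sum (fun y' _ => hb0 y') (Finset.mem_univ y)
      _ = 1 := this
  have hmarg : ∀ x y, a x + b y - 1 ≤ P x y := by
    intro x y
    have h1 : a x - P x y = ∑ y' ∈ Finset.univ.erase y, P x y' := by
      rw [ha]
      have := Finset.add_sum_erase Finset.univ (P x) (Finset.mem_univ y)
      simp only at this ⊢
      linarith [this]
    have h2 : ∑ y' ∈ Finset.univ.erase y, P x y'
        ≤ ∑ x', ∑ y' ∈ Finset.univ.erase y, P x' y' :=
      Finset.single_le_sum
        (fun x' _ => Finset.sum_nonneg fun y' _ => hP x' y') (Finset.mem_univ x)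
    have h3 : ∑ x', ∑ y' ∈ Finset.univ.erase y, P x' y' = 1 - b y := by
      have : ∀ x', ∑ y' ∈ Finset.univ.erase y, P x' y' = a x' - P x' y := by
        intro x'
        have := Finset.add_sum_erase Finset.univ (P x') (Finset.mem_univ y)
        simp only [ha]
        linarith [this]
      rw [Finset.sum_congr rfl fun x' _ => this x', Finset.sum_sub_distrib, hsum]
    linarith [h2.trans h3.le]
  have E1 : (∑ x, (a x) ^ q) = ∑ x, ∑ y, P x y * (a x) ^ (q - 1) := by
    refine Finset.sum_congr rfl fun x _ => ?_
    rw [hpow (ha0 x) hq1, ← Finset.sum_mul]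
  have E2 : (∑ y, (b y) ^ q) = ∑ x, ∑ y, P x y * (b y) ^ (q - 1) := by
    rw [Finset.sum_comm]
    refine Finset.sum_congr rfl fun y _ => ?_
    rw [hpow (hb0 y) hq1, ← Finset.sum_mul]
  have E3 : (∑ x, ∑ y, (P x y) ^ q) = ∑ x, ∑ y, P x y * (P x y) ^ (q - 1) :=
    Finset.sum_congr rfl fun x _ => Finset.sum_congr rfl fun y _ =>
      hpow (hP x y) hq1
  have key : (∑ x, ∑ y, P x y * (a x) ^ (q - 1))
      + (∑ x, ∑ y, P x y * (b y) ^ (q - 1))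
      ≤ ∑ x, ∑ y, (P x y * 1 + P x y * (P x y) ^ (q - 1)) := by
    rw [← Finset.sum_add_distrib]
    simp only [← Finset.sum_add_distrib]
    refine Finset.sum_le_sum fun x _ => Finset.sum_le_sum fun y _ => ?_
    have hsc := hts (ha0 x) (ha1 x) (hb0 y) (hb1 y) (hP x y)
      (hmarg x y) hr1
    calc P x y * a x ^ (q-1) + P x y * b y ^ (q-1)
        = P x y * (a x ^ (q-1) + b y ^ (q-1)) := by ring
      _ ≤ P x y * (1 + P x y ^ (q-1)) := mul_le_mul_of_nonneg_left hsc (hP x y)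
      _ = P x y * 1 + P x y * P x y ^ (q-1) := by ring
  have split : ∑ x, ∑ y, (P x y * 1 + P x y * (P x y) ^ (q - 1))
      = 1 + ∑ x, ∑ y, P x y * (P x y) ^ (q - 1) := by
    simp only [Finset.sum_add_distrib, mul_one, hsum]
    rw [show ∑ x, ∑ y, P x y = 1 from hsum]
  rw [E1, E2, E3]
  rw [split] at key
  exact key

end

/-- Collapse a unitary rotation on a summed leg of a sesquilinear gram sum. -/
lemma sum3_swap {A B C M : Type*} [AddCommMonoid M] [Fintype A] [Fintype B]
    [Fintype C] (f : A → B → C → M) :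
    ∑ a, ∑ b, ∑ c, f a b c = ∑ c, ∑ a, ∑ b, f a b c :=
  calc ∑ a, ∑ b, ∑ c, f a b c
      = ∑ a, ∑ c, ∑ b, f a b c := Finset.sum_congr rfl fun a _ => Finset.sum_comm
    _ = ∑ c, ∑ a, ∑ b, f a b c := Finset.sum_comm

lemma sum4_swap {A B C D M : Type*} [AddCommMonoid M] [Fintype A] [Fintype B]
    [Fintype C] [Fintype D] (f : A → B → C → D → M) :
    ∑ a, ∑ b, ∑ c, ∑ d, f a b c d = ∑ c, ∑ d, ∑ a, ∑ b, f a b c d :=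
  calc ∑ a, ∑ b, ∑ c, ∑ d, f a b c d
      = ∑ a, ∑ c, ∑ b, ∑ d, f a b c d :=
        Finset.sum_congr rfl fun a _ => Finset.sum_comm
    _ = ∑ c, ∑ a, ∑ b, ∑ d, f a b c d := Finset.sum_comm
    _ = ∑ c, ∑ a, ∑ d, ∑ b, f a b c d :=
        Finset.sum_congr rfl fun c _ => Finset.sum_congr rfl fun a _ => Finset.sum_comm
    _ = ∑ c, ∑ d, ∑ a, ∑ b, f a b c d :=
        Finset.sum_congr rfl fun c _ => Finset.sum_comm

lemma collapse1 {I O : Type*} [Fintype I] [Fintype O] [DecidableEq I]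
    (U : I → I → ℂ) (hU : ∀ p p', ∑ s, star (U p s) * U p' s = if p = p' then 1 else 0)
    (T T' : I → O → ℂ) :
    ∑ s, ∑ o, (∑ p, star (U p s) * T p o) * star (∑ p, star (U p s) * T' p o)
      = ∑ p, ∑ o, T p o * star (T' p o) := by
  have expand : ∀ s o, (∑ p, star (U p s) * T p o) * star (∑ p, star (U p s) * T' p o)
      = ∑ p, ∑ p', (star (U p s) * U p' s) * (T p o * star (T' p' o)) := by
    intro s o
    rw [star_sum, Finset.sum_mul_sum]
    refine Finset.sum_congr rfl fun p _ => Finset.sum_congr rfl fun p' _ => ?_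
    rw [star_mul, star_star]
    ring
  calc ∑ s, ∑ o, (∑ p, star (U p s) * T p o) * star (∑ p, star (U p s) * T' p o)
      = ∑ s, ∑ o, ∑ p, ∑ p', (star (U p s) * U p' s) * (T p o * star (T' p' o)) := by
        exact Finset.sum_congr rfl fun s _ => Finset.sum_congr rfl fun o _ => expand s o
    _ = ∑ p, ∑ p', ∑ s, ∑ o, (star (U p s) * U p' s) * (T p o * star (T' p' o)) :=
        sum4_swap _
    _ = ∑ p, ∑ p', (∑ s, star (U p s) * U p' s) * (∑ o, T p o * star (T' p' o)) := by
        refine Finset.sum_congr rfl fun p _ => Finset.sum_congr rfl fun p' _ => ?_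
        rw [Finset.sum_mul_sum]
    _ = ∑ p, ∑ o, T p o * star (T' p o) := by
        refine Finset.sum_congr rfl fun p _ => ?_
        rw [Finset.sum_eq_single p]
        · rw [hU p p, if_pos rfl, one_mul]
        · intro p' _ hp'
          rw [hU p p', if_neg (Ne.symm hp'), zero_mul]
        · intro h; exact absurd (Finset.mem_univ p) h
  -- done

section gram
variable {I J K : Type*} [Fintype I] [Fintype J] [Fintype K]
  [DecidableEq I] [DecidableEq J] [DecidableEq K]

/-- The triple-rotated tensor. -/
noncomputable def rot3 (U : I → I → ℂ) (V : J → J → ℂ) (W : K → K → ℂ)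
    (φ : I → J → K → ℂ) (z : I) (x : J) (y : K) : ℂ :=
  ∑ z₁, ∑ x₁, ∑ y₁,
    star (U z₁ z) * (star (V x₁ x) * (star (W y₁ y) * φ z₁ x₁ y₁))

/-- Gram of the rotated tensor over legs 1,3 equals the `V`-conjugated gram of `φ`. -/
lemma gram_rotated (U : I → I → ℂ) (V : J → J → ℂ) (W : K → K → ℂ)
    (hU : ∀ p p', ∑ s, star (U p s) * U p' s = if p = p' then 1 else 0)
    (hW : ∀ p p', ∑ s, star (W p s) * W p' s = if p = p' then 1 else 0)
    (φ : I → J → K → ℂ) (G : J → J → ℂ)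
    (hG : ∀ x₁ x₂, ∑ z₁, ∑ y₁, φ z₁ x₁ y₁ * star (φ z₁ x₂ y₁) = G x₁ x₂)
    (x x' : J) :
    ∑ z, ∑ y, rot3 U V W φ z x y * star (rot3 U V W φ z x' y)
      = ∑ x₁, ∑ x₂, star (V x₁ x) * V x₂ x' * G x₁ x₂ := by
  set E : I → J → K → ℂ := fun z₁ x y₁ => ∑ x₁, star (V x₁ x) * φ z₁ x₁ y₁ with hE
  set C : I → J → K → ℂ := fun z₁ x y => ∑ y₁, star (W y₁ y) * E z₁ x y₁ with hC
  have hBC : ∀ z x y, rot3 U V W φ z x y = ∑ z₁, star (U z₁ z) * C z₁ x y := by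
    intro z x y
    rw [rot3]
    refine Finset.sum_congr rfl fun z₁ _ => ?_
    rw [hC]
    simp only [hE, Finset.mul_sum]
    rw [Finset.sum_comm]
    refine Finset.sum_congr rfl fun x₁ _ => Finset.sum_congr rfl fun y₁ _ => by ring
  have step1 : ∑ z, ∑ y, rot3 U V W φ z x y * star (rot3 U V W φ z x' y)
      = ∑ z₁, ∑ y, C z₁ x y * star (C z₁ x' y) := by
    simp only [hBC]
    exact collapse1 U hU (fun z₁ y => C z₁ x y) (fun z₁ y => C z₁ x' y)
  have step2 : ∑ z₁, ∑ y, C z₁ x y * star (C z₁ x' y)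
      = ∑ y₁, ∑ z₁, E z₁ x y₁ * star (E z₁ x' y₁) := by
    rw [Finset.sum_comm]
    simp only [hC]
    exact collapse1 W hW (fun y₁ z₁ => E z₁ x y₁) (fun y₁ z₁ => E z₁ x' y₁)
  have e : ∀ y₁ z₁, E z₁ x y₁ * star (E z₁ x' y₁)
      = ∑ x₁, ∑ x₂, (star (V x₁ x) * V x₂ x') * (φ z₁ x₁ y₁ * star (φ z₁ x₂ y₁)) := by
    intro y₁ z₁
    rw [hE]
    simp only
    rw [star_sum, Finset.sum_mul_sum]
    refine Finset.sum_congr rfl fun x₁ _ => Finset.sum_congr rfl fun x₂ _ => ?_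
    rw [star_mul, star_star]
    ring
  rw [step1, step2]
  calc ∑ y₁, ∑ z₁, E z₁ x y₁ * star (E z₁ x' y₁)
      = ∑ y₁, ∑ z₁, ∑ x₁, ∑ x₂,
          (star (V x₁ x) * V x₂ x') * (φ z₁ x₁ y₁ * star (φ z₁ x₂ y₁)) :=
        Finset.sum_congr rfl fun y₁ _ => Finset.sum_congr rfl fun z₁ _ => e y₁ z₁
    _ = ∑ x₁, ∑ x₂, ∑ y₁, ∑ z₁,
          (star (V x₁ x) * V x₂ x') * (φ z₁ x₁ y₁ * star (φ z₁ x₂ y₁)) := sum4_swap _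
    _ = ∑ x₁, ∑ x₂, star (V x₁ x) * V x₂ x' * G x₁ x₂ := by
        refine Finset.sum_congr rfl fun x₁ _ => Finset.sum_congr rfl fun x₂ _ => ?_
        simp only [← Finset.mul_sum]
        congr 1
        rw [Finset.sum_comm]
        exact hG x₁ x₂

end gram

section perm
variable {I J K : Type*} [Fintype I] [Fintype J] [Fintype K]

lemma rot3_perm1 (U : I → I → ℂ) (V : J → J → ℂ) (W : K → K → ℂ)
    (φ : I → J → K → ℂ) (z : I) (x : J) (y : K) :
    rot3 U V W φ z x y = rot3 V U W (fun x z y => φ z x y) x z y := by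
  rw [rot3, rot3, Finset.sum_comm]
  exact Finset.sum_congr rfl fun z₁ _ => Finset.sum_congr rfl fun x₁ _ =>
    Finset.sum_congr rfl fun y₁ _ => by ring

lemma rot3_perm2 (U : I → I → ℂ) (V : J → J → ℂ) (W : K → K → ℂ)
    (φ : I → J → K → ℂ) (z : I) (x : J) (y : K) :
    rot3 U V W φ z x y = rot3 U W V (fun z y x => φ z x y) z y x := by
  rw [rot3, rot3]
  refine Finset.sum_congr rfl fun z₁ _ => ?_
  rw [Finset.sum_comm]
  exact Finset.sum_congr rfl fun y₁ _ => Finset.sum_congr rfl fun x₁ _ => by ring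

end perm

section spec
variable {n : Type*} [Fintype n] [DecidableEq n]

lemma unitary_rows (U : Matrix.unitaryGroup n ℂ) (p p' : n) :
    ∑ s, star ((U : Matrix n n ℂ) p s) * (U : Matrix n n ℂ) p' s
      = if p = p' then 1 else 0 := by
  have h : (U : Matrix n n ℂ) * star (U : Matrix n n ℂ) = 1 :=
    (Matrix.mem_unitaryGroup_iff).mp U.2
  have h2 := congr_fun (congr_fun h p') p
  rw [Matrix.mul_apply] at h2
  simp only [Matrix.star_apply, Matrix.one_apply] at h2
  calc ∑ s, star ((U : Matrix n n ℂ) p s) * (U : Matrix n n ℂ) p' s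
      = ∑ s, (U : Matrix n n ℂ) p' s * star ((U : Matrix n n ℂ) p s) :=
        Finset.sum_congr rfl fun s _ => by ring
    _ = if p' = p then 1 else 0 := h2
    _ = if p = p' then 1 else 0 := by
        by_cases hpp : p = p'
        · simp [hpp]
        · rw [if_neg (fun h' => hpp h'.symm), if_neg hpp]

lemma spec_entry {A : Matrix n n ℂ} (hA : A.IsHermitian) (x x' : n) :
    ∑ x₁, ∑ x₂, star ((hA.eigenvectorUnitary : Matrix n n ℂ) x₁ x)
        * (hA.eigenvectorUnitary : Matrix n n ℂ) x₂ x' * A x₁ x₂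
      = if x = x' then ((hA.eigenvalues x : ℝ) : ℂ) else 0 := by
  have h : star (hA.eigenvectorUnitary : Matrix n n ℂ) * A * (hA.eigenvectorUnitary : Matrix n n ℂ)
      = Matrix.diagonal (RCLike.ofReal ∘ hA.eigenvalues) := by
    rw [← hA.conjStarAlgAut_star_eigenvectorUnitary, Unitary.conjStarAlgAut_star_apply]
  have h2 := congr_fun (congr_fun h x) x'
  rw [Matrix.mul_apply] at h2
  simp only [Matrix.mul_apply, Matrix.star_apply] at h2
  rw [Matrix.diagonal_apply] at h2
  calc ∑ x₁, ∑ x₂, star ((hA.eigenvectorUnitary : Matrix n n ℂ) x₁ x)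
        * (hA.eigenvectorUnitary : Matrix n n ℂ) x₂ x' * A x₁ x₂
      = ∑ x₂, (∑ x₁, star ((hA.eigenvectorUnitary : Matrix n n ℂ) x₁ x) * A x₁ x₂)
          * (hA.eigenvectorUnitary : Matrix n n ℂ) x₂ x' := by
        rw [Finset.sum_comm]
        refine Finset.sum_congr rfl fun x₂ _ => ?_
        rw [Finset.sum_mul]
        exact Finset.sum_congr rfl fun x₁ _ => by ring
    _ = if x = x' then ((hA.eigenvalues x : ℝ) : ℂ) else 0 := by
        rw [h2]
        simp [Function.comp]

end spec

section main
variable {Z X Y : Type*} [Fintype Z] [Fintype X] [Fintype Y]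
  [DecidableEq Z] [DecidableEq X] [DecidableEq Y]

lemma main_ineq (ψ : Z → X → Y → ℂ)
    (ρi : Matrix Z Z ℂ) (ρj : Matrix X X ℂ) (ρk : Matrix Y Y ℂ)
    (hi : ∀ z z', ∑ x, ∑ y, ψ z x y * star (ψ z' x y) = ρi z z')
    (hj : ∀ x x', ∑ z, ∑ y, ψ z x y * star (ψ z x' y) = ρj x x')
    (hk : ∀ y y', ∑ z, ∑ x, ψ z x y * star (ψ z x y') = ρk y y')
    (hhi : ρi.IsHermitian) (hhj : ρj.IsHermitian) (hhk : ρk.IsHermitian)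
    (hnorm : ∑ z, ∑ x, ∑ y, Complex.normSq (ψ z x y) = 1)
    {q : ℝ} (hq : 2 ≤ q) :
    (∑ x, hhj.eigenvalues x ^ q) + (∑ y, hhk.eigenvalues y ^ q)
      ≤ 1 + ∑ z, hhi.eigenvalues z ^ q := by
  have hq1 : (1:ℝ) ≤ q := by linarith
  set U : Matrix Z Z ℂ := (hhi.eigenvectorUnitary : Matrix Z Z ℂ) with hUdef
  set V : Matrix X X ℂ := (hhj.eigenvectorUnitary : Matrix X X ℂ) with hVdef
  set W : Matrix Y Y ℂ := (hhk.eigenvectorUnitary : Matrix Y Y ℂ) with hWdef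
  set lam : Z → ℝ := hhi.eigenvalues with hlamdef
  set a : X → ℝ := hhj.eigenvalues with hadef
  set b : Y → ℝ := hhk.eigenvalues with hbdef
  have hU : ∀ p p', ∑ s, star (U p s) * U p' s = if p = p' then 1 else 0 :=
    unitary_rows hhi.eigenvectorUnitary
  have hV : ∀ p p', ∑ s, star (V p s) * V p' s = if p = p' then 1 else 0 :=
    unitary_rows hhj.eigenvectorUnitary
  have hW : ∀ p p', ∑ s, star (W p s) * W p' s = if p = p' then 1 else 0 :=
    unitary_rows hhk.eigenvectorUnitary
  set B : Z → X → Y → ℂ := rot3 (fun p s => U p s) (fun p s => V p s) (fun p s => W p s) ψ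
    with hBdef
  -- the three gram identities
  have hGi : ∀ z z', ∑ x, ∑ y, B z x y * star (B z' x y)
      = if z = z' then ((lam z : ℝ) : ℂ) else 0 := by
    intro z z'
    have e : ∀ z x y, B z x y
        = rot3 (fun p s => V p s) (fun p s => U p s) (fun p s => W p s)
            (fun x z y => ψ z x y) x z y := by
      intro z x y; rw [hBdef]; exact rot3_perm1 _ _ _ _ z x y
    calc ∑ x, ∑ y, B z x y * star (B z' x y)
        = ∑ x, ∑ y, rot3 _ _ _ (fun x z y => ψ z x y) x z y
            * star (rot3 _ _ _ (fun x z y => ψ z x y) x z' y) := by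
          exact Finset.sum_congr rfl fun x _ => Finset.sum_congr rfl fun y _ => by
            rw [e z x y, e z' x y]
      _ = ∑ z₁, ∑ z₂, star (U z₁ z) * U z₂ z' * ρi z₁ z₂ :=
          gram_rotated _ _ _ hV hW _ ρi (fun z₁ z₂ => hi z₁ z₂) z z'
      _ = if z = z' then ((lam z : ℝ) : ℂ) else 0 := spec_entry hhi z z'
  have hGj : ∀ x x', ∑ z, ∑ y, B z x y * star (B z x' y)
      = if x = x' then ((a x : ℝ) : ℂ) else 0 := by
    intro x x'
    calc ∑ z, ∑ y, B z x y * star (B z x' y)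
        = ∑ x₁, ∑ x₂, star (V x₁ x) * V x₂ x' * ρj x₁ x₂ :=
          gram_rotated _ _ _ hU hW _ ρj (fun x₁ x₂ => hj x₁ x₂) x x'
      _ = if x = x' then ((a x : ℝ) : ℂ) else 0 := spec_entry hhj x x'
  have hGk : ∀ y y', ∑ z, ∑ x, B z x y * star (B z x y')
      = if y = y' then ((b y : ℝ) : ℂ) else 0 := by
    intro y y'
    have e : ∀ z x y, B z x y
        = rot3 (fun p s => U p s) (fun p s => W p s) (fun p s => V p s)
            (fun z y x => ψ z x y) z y x := by
      intro z x y; rw [hBdef]; exact rot3_perm2 _ _ _ _ z x y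
    calc ∑ z, ∑ x, B z x y * star (B z x y')
        = ∑ z, ∑ x, rot3 _ _ _ (fun z y x => ψ z x y) z y x
            * star (rot3 _ _ _ (fun z y x => ψ z x y) z y' x) := by
          exact Finset.sum_congr rfl fun z _ => Finset.sum_congr rfl fun x _ => by
            rw [e z x y, e z x y']
      _ = ∑ y₁, ∑ y₂, star (W y₁ y) * W y₂ y' * ρk y₁ y₂ :=
          gram_rotated _ _ _ hU hV _ ρk (fun y₁ y₂ => hk y₁ y₂) y y'
      _ = if y = y' then ((b y : ℝ) : ℂ) else 0 := spec_entry hhk y y'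
  -- real (normSq) versions of the gram diagonals
  set S : Z → X → Y → ℝ := fun z x y => Complex.normSq (B z x y) with hSdef
  have hBB : ∀ (c : ℂ), c * star c = ((Complex.normSq c : ℝ) : ℂ) := fun c => by
    rw [Complex.star_def, Complex.mul_conj]
  have hSi : ∀ z, ∑ x, ∑ y, S z x y = lam z := by
    intro z
    have h := hGi z z
    rw [if_pos rfl] at h
    have h2 : ((∑ x, ∑ y, S z x y : ℝ) : ℂ) = ((lam z : ℝ) : ℂ) := by
      rw [← h]
      push_cast
      exact Finset.sum_congr rfl fun x _ => Finset.sum_congr rfl fun y _ => (hBB _).symm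
    exact_mod_cast h2
  have hSj : ∀ x, ∑ z, ∑ y, S z x y = a x := by
    intro x
    have h := hGj x x
    rw [if_pos rfl] at h
    have h2 : ((∑ z, ∑ y, S z x y : ℝ) : ℂ) = ((a x : ℝ) : ℂ) := by
      rw [← h]
      push_cast
      exact Finset.sum_congr rfl fun z _ => Finset.sum_congr rfl fun y _ => (hBB _).symm
    exact_mod_cast h2
  have hSk : ∀ y, ∑ z, ∑ x, S z x y = b y := by
    intro y
    have h := hGk y y
    rw [if_pos rfl] at h
    have h2 : ((∑ z, ∑ x, S z x y : ℝ) : ℂ) = ((b y : ℝ) : ℂ) := by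
      rw [← h]
      push_cast
      exact Finset.sum_congr rfl fun z _ => Finset.sum_congr rfl fun x _ => (hBB _).symm
    exact_mod_cast h2
  have hS0 : ∀ z x y, 0 ≤ S z x y := fun z x y => Complex.normSq_nonneg _
  have hlam0 : ∀ z, 0 ≤ lam z := fun z => (hSi z) ▸
    (Finset.sum_nonneg fun x _ => Finset.sum_nonneg fun y _ => hS0 z x y)
  have ha0 : ∀ x, 0 ≤ a x := fun x => (hSj x) ▸
    (Finset.sum_nonneg fun z _ => Finset.sum_nonneg fun y _ => hS0 z x y)
  have hb0 : ∀ y, 0 ≤ b y := fun y => (hSk y) ▸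
    (Finset.sum_nonneg fun z _ => Finset.sum_nonneg fun x _ => hS0 z x y)
  -- trace of ρi is 1, hence ∑ lam = 1
  have tr_diag : ∑ z, ρi z z = 1 := by
    have e : ∀ z, ρi z z = ((∑ x, ∑ y, Complex.normSq (ψ z x y) : ℝ) : ℂ) := by
      intro z
      rw [← hi z z]
      push_cast
      exact Finset.sum_congr rfl fun x _ => Finset.sum_congr rfl fun y _ => hBB _
    rw [Finset.sum_congr rfl fun z _ => e z, ← Complex.ofReal_sum, hnorm,
      Complex.ofReal_one]
  have tr_spec : ∑ z, ρi z z = ∑ z, ((lam z : ℝ) : ℂ) := by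
    have h1 : Matrix.trace ρi = ∑ z, ρi z z := rfl
    have h2 : Matrix.trace ρi = ∑ z, ((lam z : ℝ) : ℂ) := by
      conv_lhs => rw [hhi.spectral_theorem]
      rw [Unitary.conjStarAlgAut_apply, Matrix.trace_mul_cycle,
        (Matrix.mem_unitaryGroup_iff').mp hhi.eigenvectorUnitary.2, one_mul,
        Matrix.trace_diagonal]
      rfl
    rw [← h1, h2]
  have hlam1 : ∑ z, lam z = 1 := by
    have h3 : ((∑ z, lam z : ℝ) : ℂ) = 1 := by
      rw [Complex.ofReal_sum, ← tr_spec, tr_diag]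
    exact_mod_cast h3
  -- the classical joint distribution
  set P : X → Y → ℝ := fun x y => ∑ z, S z x y with hPdef
  have hP0 : ∀ x y, 0 ≤ P x y := fun x y => Finset.sum_nonneg fun z _ => hS0 z x y
  have hPy : ∀ x, ∑ y, P x y = a x := by
    intro x
    rw [hPdef]
    simp only
    rw [Finset.sum_comm]
    exact hSj x
  have hPx : ∀ y, ∑ x, P x y = b y := by
    intro y
    rw [hPdef]
    simp only
    rw [Finset.sum_comm]
    exact hSk y
  have hPsum : ∑ x, ∑ y, P x y = 1 := by
    rw [Finset.sum_congr rfl fun x _ => hPy x]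
    -- ∑ x, a x = 1
    have e1 : ∑ x, a x = ∑ x, ∑ z, ∑ y, S z x y :=
      Finset.sum_congr rfl fun x _ => (hSj x).symm
    have e2 : ∑ x, ∑ z, ∑ y, S z x y = ∑ z, ∑ x, ∑ y, S z x y := Finset.sum_comm
    have e3 : ∑ z, ∑ x, ∑ y, S z x y = ∑ z, lam z :=
      Finset.sum_congr rfl fun z _ => hSi z
    rw [e1, e2, e3, hlam1]
  -- weights
  have hSzero : ∀ z, lam z = 0 → ∀ x y, S z x y = 0 := by
    intro z hz x y
    have h0 : ∑ x, ∑ y, S z x y = 0 := by rw [hSi z, hz]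
    have h1 := (Finset.sum_eq_zero_iff_of_nonneg
      (fun x _ => Finset.sum_nonneg fun y _ => hS0 z x y)).mp h0 x (Finset.mem_univ x)
    exact (Finset.sum_eq_zero_iff_of_nonneg (fun y _ => hS0 z x y)).mp h1 y
      (Finset.mem_univ y)
  set Wgt : Z → X → Y → ℝ := fun z x y => if lam z = 0 then 0 else S z x y / lam z
    with hWgtdef
  have hWgt0 : ∀ z x y, 0 ≤ Wgt z x y := by
    intro z x y
    rw [hWgtdef]
    simp only
    split
    · exact le_refl 0
    · exact div_nonneg (hS0 z x y) (hlam0 z)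
  have hPw : ∀ x y, P x y = ∑ z, Wgt z x y * lam z := by
    intro x y
    rw [hPdef, hWgtdef]
    simp only
    refine Finset.sum_congr rfl fun z _ => ?_
    by_cases hz : lam z = 0
    · rw [if_pos hz, hz, mul_zero, hSzero z hz x y]
    · rw [if_neg hz]
      field_simp
  -- Bessel bound on the weights
  have hBes : ∀ x y, ∑ z, Wgt z x y ≤ 1 := by
    intro x y
    set c : Z → ℂ := fun z =>
      if lam z = 0 then 0 else star (B z x y) / ((lam z : ℝ) : ℂ) with hcdef
    set u : X → Y → ℂ := fun x' y' => ∑ z, c z * B z x' y' with hudef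
    have huxy : u x y = ((∑ z, Wgt z x y : ℝ) : ℂ) := by
      rw [hudef]
      simp only
      rw [Complex.ofReal_sum]
      refine Finset.sum_congr rfl fun z _ => ?_
      rw [hcdef, hWgtdef]
      simp only
      by_cases hz : lam z = 0
      · rw [if_pos hz, if_pos hz, zero_mul, Complex.ofReal_zero]
      · rw [if_neg hz, if_neg hz, div_mul_eq_mul_div, mul_comm, hBB,
          Complex.ofReal_div]
    have hterm : ∀ z, (c z * star (c z)) * ((lam z : ℝ) : ℂ)
        = ((Wgt z x y : ℝ) : ℂ) := by
      intro z
      rw [hBB (c z), hcdef, hWgtdef]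
      simp only
      by_cases hz : lam z = 0
      · rw [if_pos hz, if_pos hz]
        simp
      · rw [if_neg hz, if_neg hz]
        rw [Complex.normSq_div, Complex.star_def, Complex.normSq_conj,
          Complex.normSq_ofReal, ← Complex.ofReal_mul]
        congr 1
        field_simp
        ring
    have hnormu : ∑ x', ∑ y', Complex.normSq (u x' y') = ∑ z, Wgt z x y := by
      have hcplx : ((∑ x', ∑ y', Complex.normSq (u x' y') : ℝ) : ℂ)
          = ((∑ z, Wgt z x y : ℝ) : ℂ) := by
        push_cast
        have expand : ∀ x' y', u x' y' * star (u x' y')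
            = ∑ z, ∑ z', (c z * star (c z')) * (B z x' y' * star (B z' x' y')) := by
          intro x' y'
          rw [hudef]
          simp only
          rw [star_sum, Finset.sum_mul_sum]
          refine Finset.sum_congr rfl fun z _ => Finset.sum_congr rfl fun z' _ => ?_
          rw [star_mul]
          ring
        calc ∑ x', ∑ y', ((Complex.normSq (u x' y') : ℝ) : ℂ)
            = ∑ x', ∑ y', u x' y' * star (u x' y') :=
              Finset.sum_congr rfl fun x' _ => Finset.sum_congr rfl fun y' _ =>
                (hBB _).symm
          _ = ∑ x', ∑ y', ∑ z, ∑ z',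
                (c z * star (c z')) * (B z x' y' * star (B z' x' y')) :=
              Finset.sum_congr rfl fun x' _ => Finset.sum_congr rfl fun y' _ =>
                expand x' y'
          _ = ∑ z, ∑ z', ∑ x', ∑ y',
                (c z * star (c z')) * (B z x' y' * star (B z' x' y')) := sum4_swap _
          _ = ∑ z, ∑ z', (c z * star (c z'))
                * (∑ x', ∑ y', B z x' y' * star (B z' x' y')) := by
              refine Finset.sum_congr rfl fun z _ => Finset.sum_congr rfl fun z' _ => ?_
              simp only [← Finset.mul_sum]
          _ = ∑ z, (c z * star (c z)) * ((lam z : ℝ) : ℂ) := by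
              refine Finset.sum_congr rfl fun z _ => ?_
              rw [Finset.sum_eq_single z]
              · rw [hGi z z, if_pos rfl]
              · intro z' _ hz'
                rw [hGi z z', if_neg (Ne.symm hz'), mul_zero]
              · intro h; exact absurd (Finset.mem_univ z) h
          _ = ∑ z, ((Wgt z x y : ℝ) : ℂ) :=
              Finset.sum_congr rfl fun z _ => hterm z
      exact_mod_cast hcplx
    have single : Complex.normSq (u x y) ≤ ∑ x', ∑ y', Complex.normSq (u x' y') := by
      calc Complex.normSq (u x y) ≤ ∑ y', Complex.normSq (u x y') :=
            Finset.single_le_sum (fun y' _ => Complex.normSq_nonneg _) (Finset.mem_univ y)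
        _ ≤ ∑ x', ∑ y', Complex.normSq (u x' y') :=
            Finset.single_le_sum
              (fun x' _ => Finset.sum_nonneg fun y' _ => Complex.normSq_nonneg _)
              (Finset.mem_univ x)
    have hval : Complex.normSq (u x y) = (∑ z, Wgt z x y) * (∑ z, Wgt z x y) := by
      rw [huxy, Complex.normSq_ofReal]
    have hWsum0 : 0 ≤ ∑ z, Wgt z x y := Finset.sum_nonneg fun z _ => hWgt0 z x y
    nlinarith [hval ▸ (single.trans_eq hnormu)]
  -- Jensen step
  have hJ : ∀ x y, (P x y) ^ q ≤ ∑ z, Wgt z x y * lam z ^ q := by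
    intro x y
    rw [hPw x y]
    exact jensen_rpow _ _ (fun z => hWgt0 z x y) hlam0 (hBes x y) hq1
  have sumWz : ∀ z, ∑ x, ∑ y, Wgt z x y = if lam z = 0 then 0 else 1 := by
    intro z
    by_cases hz : lam z = 0
    · rw [if_pos hz]
      rw [Finset.sum_eq_zero]
      intro x _
      rw [Finset.sum_eq_zero]
      intro y _
      rw [hWgtdef]
      simp only [if_pos hz]
    · rw [if_neg hz]
      have e : ∀ x y, Wgt z x y = S z x y / lam z := by
        intro x y; rw [hWgtdef]; simp only [if_neg hz]
      calc ∑ x, ∑ y, Wgt z x y = ∑ x, ∑ y, S z x y / lam z :=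
            Finset.sum_congr rfl fun x _ => Finset.sum_congr rfl fun y _ => e x y
        _ = (∑ x, ∑ y, S z x y) / lam z := by
            rw [Finset.sum_div]
            exact Finset.sum_congr rfl fun x _ => by rw [Finset.sum_div]
        _ = 1 := by rw [hSi z]; field_simp
  have sumPq : ∑ x, ∑ y, (P x y) ^ q ≤ ∑ z, lam z ^ q := by
    calc ∑ x, ∑ y, (P x y) ^ q
        ≤ ∑ x, ∑ y, ∑ z, Wgt z x y * lam z ^ q :=
          Finset.sum_le_sum fun x _ => Finset.sum_le_sum fun y _ => hJ x y
      _ = ∑ z, ∑ x, ∑ y, Wgt z x y * lam z ^ q := sum3_swap _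
      _ = ∑ z, (∑ x, ∑ y, Wgt z x y) * lam z ^ q := by
          refine Finset.sum_congr rfl fun z _ => ?_
          rw [Finset.sum_mul]
          exact Finset.sum_congr rfl fun x _ => by rw [Finset.sum_mul]
      _ ≤ ∑ z, lam z ^ q := by
          refine Finset.sum_le_sum fun z _ => ?_
          rw [sumWz z]
          by_cases hz : lam z = 0
          · rw [if_pos hz, zero_mul]
            exact Real.rpow_nonneg (hlam0 z) q
          · rw [if_neg hz, one_mul]
  -- classical subadditivity
  have hclass := classical_subadd P hP0 hPsum hq
    (fun {x r} hx h1 hr => rpow_le_self' hx h1 hr)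
    (fun {a b c r} h1 h2 h3 h4 h5 h6 h7 => rpow_triangle_scalar h1 h2 h3 h4 h5 h6 h7)
    (fun {x q'} hx hq' => rpow_eq_mul_rpow_sub_one hx hq')
  have e1 : ∑ x, (∑ y, P x y) ^ q = ∑ x, a x ^ q :=
    Finset.sum_congr rfl fun x _ => by rw [hPy x]
  have e2 : ∑ y, (∑ x, P x y) ^ q = ∑ y, b y ^ q :=
    Finset.sum_congr rfl fun y _ => by rw [hPx y]
  rw [e1, e2] at hclass
  linarith [sumPq]


end main


/-- The single-party reduced density matrix `ρ_j` of a pure multipartite state `ψ`. -/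
noncomputable def reduced1 {n : ℕ} (d : Fin n → ℕ) (ψ : (∀ i, Fin (d i)) → ℂ)
    (j : Fin n) : Matrix (Fin (d j)) (Fin (d j)) ℂ :=
  fun x y => ∑ f : ∀ i, Fin (d i),
    if f j = x then ψ f * star (ψ (Function.update f j y)) else 0


lemma key_ineq (d : Fin 3 → ℕ) (hd : ∀ i, 2 ≤ d i)
    (ψ : (∀ i, Fin (d i)) → ℂ) (hψ : ∑ f, Complex.normSq (ψ f) = 1)
    (q : ℝ) (hq : 2 ≤ q)
    (hherm : ∀ j, (reduced1 d ψ j).IsHermitian)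
    (i j k : Fin 3) (hij : i ≠ j) (hjk : j ≠ k) (hik : i ≠ k) :
    traceRpow (reduced1 d ψ j) (hherm j) q + traceRpow (reduced1 d ψ k) (hherm k) q
      ≤ 1 + traceRpow (reduced1 d ψ i) (hherm i) q := by
  have hne : ∀ m, Nonempty (Fin (d m)) := fun m =>
    ⟨⟨0, by have := hd m; omega⟩⟩
  have hmem : ∀ m : Fin 3, m = i ∨ m = j ∨ m = k := by
    intro m
    have h1 : (i : ℕ) ≠ (j : ℕ) := fun h => hij (Fin.ext h)
    have h2 : (j : ℕ) ≠ (k : ℕ) := fun h => hjk (Fin.ext h)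
    have h3 : (i : ℕ) ≠ (k : ℕ) := fun h => hik (Fin.ext h)
    have hi3 := i.isLt
    have hj3 := j.isLt
    have hk3 := k.isLt
    have hm3 := m.isLt
    have : (m : ℕ) = i ∨ (m : ℕ) = j ∨ (m : ℕ) = k := by omega
    rcases this with h | h | h
    · exact Or.inl (Fin.ext h)
    · exact Or.inr (Or.inl (Fin.ext h))
    · exact Or.inr (Or.inr (Fin.ext h))
  classical
  set base : ∀ m, Fin (d m) := fun m => Classical.arbitrary _ with hbase
  set g : Fin (d i) → Fin (d j) → Fin (d k) → (∀ m, Fin (d m)) := fun z x y =>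
    Function.update (Function.update (Function.update base i z) j x) k y with hg
  have hgi : ∀ z x y, g z x y i = z := by
    intro z x y
    rw [hg]
    simp only
    rw [Function.update_of_ne hik, Function.update_of_ne hij, Function.update_self]
  have hgj : ∀ z x y, g z x y j = x := by
    intro z x y
    rw [hg]
    simp only
    rw [Function.update_of_ne hjk, Function.update_self]
  have hgk : ∀ z x y, g z x y k = y := by
    intro z x y
    rw [hg]
    simp only
    rw [Function.update_self]
  have hupd_i : ∀ z z' x y, Function.update (g z x y) i z' = g z' x y := by
    intro z z' x y
    funext m
    rcases hmem m with rfl | rfl | rfl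
    · rw [Function.update_self, hgi]
    · rw [Function.update_of_ne (Ne.symm hij), hgj, hgj]
    · rw [Function.update_of_ne (Ne.symm hik), hgk, hgk]
  have hupd_j : ∀ z x x' y, Function.update (g z x y) j x' = g z x' y := by
    intro z x x' y
    funext m
    rcases hmem m with rfl | rfl | rfl
    · rw [Function.update_of_ne hij, hgi, hgi]
    · rw [Function.update_self, hgj]
    · rw [Function.update_of_ne (Ne.symm hjk), hgk, hgk]
  have hupd_k : ∀ z x y y', Function.update (g z x y) k y' = g z x y' := by
    intro z x y y'
    funext m
    rcases hmem m with rfl | rfl | rfl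
    · rw [Function.update_of_ne hik, hgi, hgi]
    · rw [Function.update_of_ne hjk, hgj, hgj]
    · rw [Function.update_self, hgk]
  set e : (Fin (d i) × Fin (d j) × Fin (d k)) ≃ (∀ m, Fin (d m)) :=
    { toFun := fun p => g p.1 p.2.1 p.2.2
      invFun := fun f => (f i, f j, f k)
      left_inv := by
        rintro ⟨z, x, y⟩
        simp only [hgi, hgj, hgk]
      right_inv := by
        intro f
        funext m
        rcases hmem m with rfl | rfl | rfl
        · exact hgi _ _ _
        · exact hgj _ _ _
        · exact hgk _ _ _ } with he
  have hsum_e : ∀ (F : (∀ m, Fin (d m)) → ℂ),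
      ∑ f, F f = ∑ z, ∑ x, ∑ y, F (g z x y) := by
    intro F
    rw [← Equiv.sum_comp e F, Fintype.sum_prod_type]
    refine Finset.sum_congr rfl fun z _ => ?_
    rw [Fintype.sum_prod_type]
    exact Finset.sum_congr rfl fun x _ => Finset.sum_congr rfl fun y _ => rfl
  set ψ' : Fin (d i) → Fin (d j) → Fin (d k) → ℂ := fun z x y => ψ (g z x y)
    with hψ'
  have hEntry_i : ∀ z z', ∑ x, ∑ y, ψ' z x y * star (ψ' z' x y)
      = reduced1 d ψ i z z' := by
    intro z z'
    rw [reduced1]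
    rw [hsum_e (fun f => if f i = z then ψ f * star (ψ (Function.update f i z')) else 0)]
    rw [Finset.sum_eq_single z]
    · refine Finset.sum_congr rfl fun x _ => Finset.sum_congr rfl fun y _ => ?_
      rw [hgi, if_pos rfl, hupd_i]
    · intro z₁ _ hz₁
      refine Finset.sum_eq_zero fun x _ => Finset.sum_eq_zero fun y _ => ?_
      rw [hgi, if_neg hz₁]
    · intro h; exact absurd (Finset.mem_univ z) h
  have hEntry_j : ∀ x x', ∑ z, ∑ y, ψ' z x y * star (ψ' z x' y)
      = reduced1 d ψ j x x' := by
    intro x x'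
    rw [reduced1]
    rw [hsum_e (fun f => if f j = x then ψ f * star (ψ (Function.update f j x')) else 0)]
    refine Finset.sum_congr rfl fun z _ => ?_
    rw [Finset.sum_eq_single x]
    · refine Finset.sum_congr rfl fun y _ => ?_
      rw [hgj, if_pos rfl, hupd_j]
    · intro x₁ _ hx₁
      refine Finset.sum_eq_zero fun y _ => ?_
      rw [hgj, if_neg hx₁]
    · intro h; exact absurd (Finset.mem_univ x) h
  have hEntry_k : ∀ y y', ∑ z, ∑ x, ψ' z x y * star (ψ' z x y')
      = reduced1 d ψ k y y' := by
    intro y y'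
    rw [reduced1]
    rw [hsum_e (fun f => if f k = y then ψ f * star (ψ (Function.update f k y')) else 0)]
    refine Finset.sum_congr rfl fun z _ => Finset.sum_congr rfl fun x _ => ?_
    rw [Finset.sum_eq_single y]
    · rw [hgk, if_pos rfl, hupd_k]
    · intro y₁ _ hy₁
      rw [hgk, if_neg hy₁]
    · intro h; exact absurd (Finset.mem_univ y) h
  have hnorm' : ∑ z, ∑ x, ∑ y, Complex.normSq (ψ' z x y) = 1 := by
    have := hsum_e (fun f => ((Complex.normSq (ψ f) : ℝ) : ℂ))
    have h2 : ((∑ f, Complex.normSq (ψ f) : ℝ) : ℂ)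
        = ((∑ z, ∑ x, ∑ y, Complex.normSq (ψ' z x y) : ℝ) : ℂ) := by
      push_cast
      exact this
    rw [hψ] at h2
    exact_mod_cast h2.symm
  have := main_ineq ψ' (reduced1 d ψ i) (reduced1 d ψ j) (reduced1 d ψ k)
    hEntry_i hEntry_j hEntry_k (hherm i) (hherm j) (hherm k) hnorm' hq
  rw [traceRpow, traceRpow, traceRpow]
  exact this


theorem stmt5 (d : Fin 3 → ℕ) (hd : ∀ i, 2 ≤ d i)
    (ψ : (∀ i, Fin (d i)) → ℂ) (hψ : ∑ f, Complex.normSq (ψ f) = 1)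
    (q : ℝ) (hq : 2 ≤ q)
    (hherm : ∀ j, (reduced1 d ψ j).IsHermitian)
    (i j k : Fin 3) (hij : i ≠ j) (hjk : j ≠ k) (hik : i ≠ k) :
    |FqEnt (reduced1 d ψ j) (hherm j) q - FqEnt (reduced1 d ψ k) (hherm k) q| ≤
        FqEnt (reduced1 d ψ i) (hherm i) q ∧
      FqEnt (reduced1 d ψ i) (hherm i) q ≤
        FqEnt (reduced1 d ψ j) (hherm j) q + FqEnt (reduced1 d ψ k) (hherm k) q := by
  have k1 := key_ineq d hd ψ hψ q hq hherm i j k hij hjk hik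
  have k2 := key_ineq d hd ψ hψ q hq hherm j k i hjk (Ne.symm hik) (Ne.symm hij)
  have k3 := key_ineq d hd ψ hψ q hq hherm k i j (Ne.symm hik) hij (Ne.symm hjk)
  simp only [FqEnt] at *
  constructor
  · rw [abs_sub_le_iff]
    constructor <;> linarith
  · linarith
end

section
/- For the 4-partite star network state |φ⟩_{1234} = (1/(2√2)) Σ_{a,b,c ∈ {0,1}} |4a+2b+c⟩|a⟩|b⟩|c⟩ on ℂ⁸⊗ℂ²⊗ℂ²⊗ℂ², the marginal q-concurrences satisfy C_q^{12|34} = 1 - 4^{1-q}, C_q^{1|234} = 1 - 8^{1-q}, and C_q^{2|134} = C_q^{3|124} = C_q^{4|123} = 1 - 2^{1-q}, and hence C_q^{12|34} ≤ C_q^{1|234} + C_q^{2|134} for all q ≥ 2. -/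
open scoped BigOperators

/-- The reduced density matrix of a pure multipartite state `ψ` on the group of
parties `S`. -/
noncomputable def reducedS {n : ℕ} (d : Fin n → ℕ) (ψ : (∀ i, Fin (d i)) → ℂ)
    (S : Finset (Fin n)) :
    Matrix (∀ i : {i // i ∈ S}, Fin (d i)) (∀ i : {i // i ∈ S}, Fin (d i)) ℂ :=
  fun x y => ∑ z : ∀ i : {i : Fin n // i ∉ S}, Fin (d i),
    ψ (fun i => if h : i ∈ S then x ⟨i, h⟩ else z ⟨i, h⟩) *
      star (ψ (fun i => if h : i ∈ S then y ⟨i, h⟩ else z ⟨i, h⟩))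

/-- The 4-partite star network state on `ℂ⁸ ⊗ ℂ² ⊗ ℂ² ⊗ ℂ²`:
`(1/(2√2)) ∑_{a,b,c} |4a+2b+c⟩|a⟩|b⟩|c⟩`. -/
noncomputable def starState : (∀ i, Fin (![8, 2, 2, 2] i)) → ℂ := fun f =>
  if (f 0 : ℕ) = 4 * (f 1 : ℕ) + 2 * (f 2 : ℕ) + (f 3 : ℕ)
  then ((1 / (2 * Real.sqrt 2) : ℝ) : ℂ) else 0


open Matrix

variable {m : Type*} [Fintype m] [DecidableEq m] {A : Matrix m m ℂ}

lemma coe_basis_ne_zero (hA : A.IsHermitian) (i : m) :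
    ⇑(hA.eigenvectorBasis i) ≠ 0 := by
  intro h
  have := hA.eigenvectorBasis.orthonormal.ne_zero i
  apply this
  ext x
  exact congrFun h x

lemma eig_eq_of_smul_one (hA : A.IsHermitian) (c : ℝ)
    (hc : A = (c : ℂ) • (1 : Matrix m m ℂ)) (i : m) : hA.eigenvalues i = c := by
  have h1 := hA.mulVec_eigenvectorBasis i
  set w := ⇑(hA.eigenvectorBasis i) with hw
  have h1' : A *ᵥ w = (c : ℂ) • w := by
    rw [hc, Matrix.smul_mulVec, Matrix.one_mulVec]
  obtain ⟨x, hx⟩ := Function.ne_iff.mp (coe_basis_ne_zero hA i)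
  have h2 := congrFun (h1.symm.trans h1') x
  simp only [Pi.smul_apply, smul_eq_mul, Complex.real_smul, Pi.zero_apply] at h2 hx
  have h3 : (hA.eigenvalues i : ℂ) = (c : ℂ) := mul_right_cancel₀ hx h2
  exact_mod_cast h3

lemma eig_zero_or_of_proj (hA : A.IsHermitian) (c : ℝ)
    (hP : A * A = (c : ℂ) • A) (i : m) :
    hA.eigenvalues i = 0 ∨ hA.eigenvalues i = c := by
  have h1 := hA.mulVec_eigenvectorBasis i
  set v := ⇑(hA.eigenvectorBasis i) with hv
  set lv := hA.eigenvalues i with hl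
  have h2 : (A * A) *ᵥ v = ((lv : ℂ) * lv) • v := by
    rw [← Matrix.mulVec_mulVec, h1, Matrix.mulVec_smul, h1]
    ext x; simp [Complex.real_smul]; ring
  rw [hP, Matrix.smul_mulVec, h1] at h2
  obtain ⟨x, hx⟩ := Function.ne_iff.mp (coe_basis_ne_zero hA i)
  have h3 := congrFun h2 x
  simp only [Pi.smul_apply, smul_eq_mul, Complex.real_smul, Pi.zero_apply] at h3 hx
  have h4 : ((lv : ℂ) * lv - c * lv) * v x = 0 := by linear_combination -h3
  rcases mul_eq_zero.mp h4 with h | h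
  · have h5 : (lv : ℂ) * (lv - c) = 0 := by ring_nf; linear_combination h
    rcases mul_eq_zero.mp h5 with h6 | h6
    · left; exact_mod_cast h6
    · right; have : (lv : ℂ) = c := by linear_combination h6
      exact_mod_cast this
  · exact absurd h hx

lemma trace_eq_sum_eig (hA : A.IsHermitian) :
    A.trace = ((∑ i, hA.eigenvalues i : ℝ) : ℂ) := by
  conv_lhs => rw [hA.spectral_theorem]
  rw [Unitary.conjStarAlgAut_apply, Matrix.trace_mul_cycle]
  have h1 : (star (hA.eigenvectorUnitary : Matrix m m ℂ)) * (hA.eigenvectorUnitary : Matrix m m ℂ) = 1 :=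
    Unitary.coe_star_mul_self _
  rw [h1, Matrix.one_mul, Matrix.trace_diagonal]
  push_cast
  rfl

abbrev S01 : Finset (Fin 4) := {0, 1}

def eOut : Fin 2 × Fin 2 ≃ (∀ i : {i : Fin 4 // i ∉ S01}, Fin (![8,2,2,2] i)) where
  toFun p := fun i => match i with
    | ⟨⟨2, _⟩, _⟩ => p.1
    | ⟨⟨3, _⟩, _⟩ => p.2
    | ⟨⟨0, _⟩, h⟩ => absurd (show (0:Fin 4) ∈ S01 by decide) h
    | ⟨⟨1, _⟩, h⟩ => absurd (show (1:Fin 4) ∈ S01 by decide) h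
  invFun z := (z ⟨2, by decide⟩, z ⟨3, by decide⟩)
  left_inv := by intro p; rfl
  right_inv := by
    intro z; funext i
    match i with
    | ⟨⟨2, _⟩, _⟩ => rfl
    | ⟨⟨3, _⟩, _⟩ => rfl
    | ⟨⟨0, _⟩, h⟩ => exact absurd (show (0:Fin 4) ∈ S01 by decide) h
    | ⟨⟨1, _⟩, h⟩ => exact absurd (show (1:Fin 4) ∈ S01 by decide) h

def eIn : Fin 8 × Fin 2 ≃ (∀ i : {i : Fin 4 // i ∈ S01}, Fin (![8,2,2,2] i)) where
  toFun p := fun i => match i with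
    | ⟨⟨0, _⟩, _⟩ => p.1
    | ⟨⟨1, _⟩, _⟩ => p.2
    | ⟨⟨2, _⟩, h⟩ => absurd h (show (2:Fin 4) ∉ S01 by decide)
    | ⟨⟨3, _⟩, h⟩ => absurd h (show (3:Fin 4) ∉ S01 by decide)
  invFun x := (x ⟨0, by decide⟩, x ⟨1, by decide⟩)
  left_inv := by intro p; rfl
  right_inv := by
    intro x; funext i
    match i with
    | ⟨⟨0, _⟩, _⟩ => rfl
    | ⟨⟨1, _⟩, _⟩ => rfl
    | ⟨⟨2, _⟩, h⟩ => exact absurd h (show (2:Fin 4) ∉ S01 by decide)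
    | ⟨⟨3, _⟩, h⟩ => exact absurd h (show (3:Fin 4) ∉ S01 by decide)

/-- matching condition for the 12-marginal -/
def cnd (x y : Fin 8 × Fin 2) : Prop :=
  ∃ p : Fin 2 × Fin 2, (x.1 : ℕ) = 4 * x.2 + 2 * p.1 + p.2 ∧
    (y.1 : ℕ) = 4 * y.2 + 2 * p.1 + p.2

instance : DecidablePred (fun xy : (Fin 8 × Fin 2) × (Fin 8 × Fin 2) => cnd xy.1 xy.2) := by
  intro xy; unfold cnd; infer_instance

instance (x y : Fin 8 × Fin 2) : Decidable (cnd x y) := by unfold cnd; infer_instance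

lemma amp_sq_real : (1 / (2 * Real.sqrt 2) : ℝ) * (1 / (2 * Real.sqrt 2)) = 1/8 := by
  have h : Real.sqrt 2 * Real.sqrt 2 = 2 := Real.mul_self_sqrt (by norm_num)
  have hpos : Real.sqrt 2 ≠ 0 := by positivity
  field_simp
  linarith

lemma amp_sq : ((1 / (2 * Real.sqrt 2) : ℝ) : ℂ) * star ((1 / (2 * Real.sqrt 2) : ℝ) : ℂ) = (1/8 : ℂ) := by
  rw [Complex.star_def, Complex.conj_ofReal, ← Complex.ofReal_mul, amp_sq_real]
  norm_num

lemma countS : ∀ x y : Fin 8 × Fin 2,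
    (Finset.univ.filter fun p : Fin 2 × Fin 2 =>
      (x.1:ℕ) = 4*x.2+2*p.1+p.2 ∧ (y.1:ℕ) = 4*y.2+2*p.1+p.2).card
      = if cnd x y then 1 else 0 := by decide

lemma rhoS_apply (x y : Fin 8 × Fin 2) :
    reducedS ![8,2,2,2] starState S01 (eIn x) (eIn y) = if cnd x y then (1/8 : ℂ) else 0 := by
  unfold reducedS
  rw [← Equiv.sum_comp eOut]
  have key : ∀ p : Fin 2 × Fin 2,
      starState (fun i => if h : i ∈ S01 then eIn x ⟨i, h⟩ else eOut p ⟨i, h⟩) *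
        star (starState (fun i => if h : i ∈ S01 then eIn y ⟨i, h⟩ else eOut p ⟨i, h⟩)) =
      if ((x.1:ℕ) = 4*x.2+2*p.1+p.2 ∧ (y.1:ℕ) = 4*y.2+2*p.1+p.2) then (1/8 : ℂ) else 0 := by
    intro p
    show (if (x.1:ℕ) = 4*(x.2:ℕ)+2*(p.1:ℕ)+(p.2:ℕ) then ((1/(2*Real.sqrt 2):ℝ):ℂ) else 0) *
      star (if (y.1:ℕ) = 4*(y.2:ℕ)+2*(p.1:ℕ)+(p.2:ℕ) then ((1/(2*Real.sqrt 2):ℝ):ℂ) else 0) = _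
    by_cases h1 : (x.1:ℕ) = 4*(x.2:ℕ)+2*(p.1:ℕ)+(p.2:ℕ)
    · by_cases h2 : (y.1:ℕ) = 4*(y.2:ℕ)+2*(p.1:ℕ)+(p.2:ℕ)
      · rw [if_pos h1, if_pos h2, if_pos ⟨h1, h2⟩]; exact amp_sq
      · rw [if_pos h1, if_neg h2, if_neg (fun hc => h2 hc.2)]; simp
    · rw [if_neg h1, zero_mul, if_neg (fun hc : _ ∧ _ => h1 hc.1)]
  rw [Finset.sum_congr rfl (fun p _ => key p)]
  rw [Finset.sum_ite, Finset.sum_const, Finset.sum_const_zero, add_zero, countS x y]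
  split_ifs <;> simp

lemma sum_indicator {α : Type*} [Fintype α] (P : α → Prop) [DecidablePred P] (a : ℂ) :
    ∑ p, (if P p then a else 0) = ((Finset.univ.filter P).card : ℂ) * a := by
  rw [Finset.sum_ite, Finset.sum_const, Finset.sum_const_zero, add_zero, nsmul_eq_mul]

lemma countMul : ∀ x y : Fin 8 × Fin 2,
    ((Finset.univ.filter fun u : Fin 8 × Fin 2 => cnd x u ∧ cnd u y).card : ℕ)
      = if cnd x y then 2 else 0 := by decide

lemma countDiag : ((Finset.univ.filter fun x : Fin 8 × Fin 2 => cnd x x).card : ℕ) = 8 := by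
  decide

lemma rhoS_mul : (reducedS ![8,2,2,2] starState S01) * (reducedS ![8,2,2,2] starState S01)
    = ((1/4 : ℂ)) • reducedS ![8,2,2,2] starState S01 := by
  ext X Y
  rw [← eIn.apply_symm_apply X, ← eIn.apply_symm_apply Y]
  set x := eIn.symm X with hx
  set y := eIn.symm Y with hy
  rw [Matrix.mul_apply, Matrix.smul_apply, rhoS_apply, ← Equiv.sum_comp eIn]
  have key : ∀ u : Fin 8 × Fin 2,
      reducedS ![8,2,2,2] starState S01 (eIn x) (eIn u) *
        reducedS ![8,2,2,2] starState S01 (eIn u) (eIn y)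
      = if cnd x u ∧ cnd u y then (1/64 : ℂ) else 0 := by
    intro u
    rw [rhoS_apply, rhoS_apply]
    by_cases h1 : cnd x u
    · by_cases h2 : cnd u y
      · rw [if_pos h1, if_pos h2, if_pos ⟨h1, h2⟩]; norm_num
      · rw [if_pos h1, if_neg h2, if_neg (fun hc : _ ∧ _ => h2 hc.2), mul_zero]
    · rw [if_neg h1, zero_mul, if_neg (fun hc : _ ∧ _ => h1 hc.1)]
  rw [Finset.sum_congr rfl fun u _ => key u, sum_indicator, countMul x y]
  split_ifs <;> norm_num

lemma rhoS_trace : (reducedS ![8,2,2,2] starState S01).trace = 1 := by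
  rw [Matrix.trace]
  unfold Matrix.diag
  rw [← Equiv.sum_comp eIn]
  have key : ∀ x : Fin 8 × Fin 2,
      reducedS ![8,2,2,2] starState S01 (eIn x) (eIn x)
        = if cnd x x then (1/8 : ℂ) else 0 := fun x => rhoS_apply x x
  rw [Finset.sum_congr rfl fun x _ => key x, sum_indicator, countDiag]
  norm_num

def eF : (Fin 8 × Fin 2 × Fin 2 × Fin 2) ≃ (∀ i, Fin (![8,2,2,2] i)) where
  toFun p := fun i => match i with
    | ⟨0, _⟩ => p.1
    | ⟨1, _⟩ => p.2.1
    | ⟨2, _⟩ => p.2.2.1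
    | ⟨3, _⟩ => p.2.2.2
  invFun f := (f 0, f 1, f 2, f 3)
  left_inv := by intro p; rfl
  right_inv := by
    intro f; funext i
    match i with
    | ⟨0, _⟩ => rfl
    | ⟨1, _⟩ => rfl
    | ⟨2, _⟩ => rfl
    | ⟨3, _⟩ => rfl


lemma if_mul_if (h c1 c2 : Prop) [Decidable h] [Decidable c1] [Decidable c2] (a : ℂ) :
    (if h then (if c1 then a else 0) * star (if c2 then a else 0) else 0)
      = if h ∧ c1 ∧ c2 then a * star a else 0 := by
  split_ifs <;> simp_all

lemma count0 : ∀ x y : Fin 8,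
    ((Finset.univ.filter fun p : Fin 8 × Fin 2 × Fin 2 × Fin 2 =>
      p.1 = x ∧ (p.1:ℕ) = 4*(p.2.1:ℕ)+2*(p.2.2.1:ℕ)+(p.2.2.2:ℕ)
        ∧ (y:ℕ) = 4*(p.2.1:ℕ)+2*(p.2.2.1:ℕ)+(p.2.2.2:ℕ)).card : ℕ)
      = if x = y then 1 else 0 := by decide

lemma count1 : ∀ x y : Fin 2,
    ((Finset.univ.filter fun p : Fin 8 × Fin 2 × Fin 2 × Fin 2 =>
      p.2.1 = x ∧ (p.1:ℕ) = 4*(x:ℕ)+2*(p.2.2.1:ℕ)+(p.2.2.2:ℕ)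
        ∧ (p.1:ℕ) = 4*(y:ℕ)+2*(p.2.2.1:ℕ)+(p.2.2.2:ℕ)).card : ℕ)
      = if x = y then 4 else 0 := by decide

lemma count2 : ∀ x y : Fin 2,
    ((Finset.univ.filter fun p : Fin 8 × Fin 2 × Fin 2 × Fin 2 =>
      p.2.2.1 = x ∧ (p.1:ℕ) = 4*(p.2.1:ℕ)+2*(x:ℕ)+(p.2.2.2:ℕ)
        ∧ (p.1:ℕ) = 4*(p.2.1:ℕ)+2*(y:ℕ)+(p.2.2.2:ℕ)).card : ℕ)
      = if x = y then 4 else 0 := by decide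

lemma count3 : ∀ x y : Fin 2,
    ((Finset.univ.filter fun p : Fin 8 × Fin 2 × Fin 2 × Fin 2 =>
      p.2.2.2 = x ∧ (p.1:ℕ) = 4*(p.2.1:ℕ)+2*(p.2.2.1:ℕ)+(x:ℕ)
        ∧ (p.1:ℕ) = 4*(p.2.1:ℕ)+2*(p.2.2.1:ℕ)+(y:ℕ)).card : ℕ)
      = if x = y then 4 else 0 := by decide

instance decFinVec0 (a : Fin 8) (b : Fin (![8,2,2,2] 0)) : Decidable (a = b) := instDecidableEqFin 8 a b
instance decFinVec1 (a : Fin 2) (b : Fin (![8,2,2,2] 1)) : Decidable (a = b) := instDecidableEqFin 2 a b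
instance decFinVec2 (a : Fin 2) (b : Fin (![8,2,2,2] 2)) : Decidable (a = b) := instDecidableEqFin 2 a b
instance decFinVec3 (a : Fin 2) (b : Fin (![8,2,2,2] 3)) : Decidable (a = b) := instDecidableEqFin 2 a b

lemma rho0_eq : reduced1 ![8,2,2,2] starState 0 = (((1/8 : ℝ)) : ℂ) • 1 := by
  ext x y
  show (∑ f : ∀ i, Fin (![8,2,2,2] i), if f 0 = x then starState f *
    star (starState (Function.update f 0 y)) else 0) = _
  rw [← Equiv.sum_comp eF]
  have key : ∀ p : Fin 8 × Fin 2 × Fin 2 × Fin 2,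
      (if (eF p) 0 = x then starState (eF p) * star (starState (Function.update (eF p) 0 y)) else 0)
      = if (p.1 = x ∧ (p.1:ℕ) = 4*(p.2.1:ℕ)+2*(p.2.2.1:ℕ)+(p.2.2.2:ℕ)
          ∧ (y:ℕ) = 4*(p.2.1:ℕ)+2*(p.2.2.1:ℕ)+(p.2.2.2:ℕ)) then (1/8 : ℂ) else 0 := by
    intro p
    rw [show (if (eF p) 0 = x then starState (eF p) * star (starState (Function.update (eF p) 0 y)) else 0)
      = if p.1 = x then
          (if (p.1 : ℕ) = 4*(p.2.1:ℕ)+2*(p.2.2.1:ℕ)+(p.2.2.2:ℕ) then ((1/(2*Real.sqrt 2):ℝ):ℂ) else 0) *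
            star (if (y : ℕ) = 4*(p.2.1:ℕ)+2*(p.2.2.1:ℕ)+(p.2.2.2:ℕ) then ((1/(2*Real.sqrt 2):ℝ):ℂ) else 0)
        else 0 from rfl, if_mul_if, amp_sq]
  rw [Finset.sum_congr rfl fun p _ => key p, sum_indicator, count0 x y]
  rw [Matrix.smul_apply, Matrix.one_apply]
  split_ifs <;> simp [Complex.real_smul] <;> norm_num <;> contradiction

lemma rho1_eq : reduced1 ![8,2,2,2] starState 1 = (((1/2 : ℝ)) : ℂ) • 1 := by
  ext x y
  show (∑ f : ∀ i, Fin (![8,2,2,2] i), if f 1 = x then starState f *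
    star (starState (Function.update f 1 y)) else 0) = _
  rw [← Equiv.sum_comp eF]
  have key : ∀ p : Fin 8 × Fin 2 × Fin 2 × Fin 2,
      (if (eF p) 1 = x then starState (eF p) * star (starState (Function.update (eF p) 1 y)) else 0)
      = if (p.2.1 = x ∧ (p.1:ℕ) = 4*(x:ℕ)+2*(p.2.2.1:ℕ)+(p.2.2.2:ℕ)
          ∧ (p.1:ℕ) = 4*(y:ℕ)+2*(p.2.2.1:ℕ)+(p.2.2.2:ℕ)) then (1/8 : ℂ) else 0 := by
    intro p
    rw [show (if (eF p) 1 = x then starState (eF p) * star (starState (Function.update (eF p) 1 y)) else 0)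
      = if p.2.1 = x then
          (if (p.1 : ℕ) = 4*(p.2.1:ℕ)+2*(p.2.2.1:ℕ)+(p.2.2.2:ℕ) then ((1/(2*Real.sqrt 2):ℝ):ℂ) else 0) *
            star (if (p.1 : ℕ) = 4*(y:ℕ)+2*(p.2.2.1:ℕ)+(p.2.2.2:ℕ) then ((1/(2*Real.sqrt 2):ℝ):ℂ) else 0)
        else 0 from rfl, if_mul_if, amp_sq]
    by_cases hpx : p.2.1 = x
    · subst hpx; rfl
    · rw [if_neg (fun hc : _ ∧ _ ∧ _ => hpx hc.1), if_neg (fun hc : _ ∧ _ ∧ _ => hpx hc.1)]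
  rw [Finset.sum_congr rfl fun p _ => key p, sum_indicator, count1 x y]
  rw [Matrix.smul_apply, Matrix.one_apply]
  split_ifs <;> simp [Complex.real_smul] <;> norm_num <;> contradiction

lemma rho2_eq : reduced1 ![8,2,2,2] starState 2 = (((1/2 : ℝ)) : ℂ) • 1 := by
  ext x y
  show (∑ f : ∀ i, Fin (![8,2,2,2] i), if f 2 = x then starState f *
    star (starState (Function.update f 2 y)) else 0) = _
  rw [← Equiv.sum_comp eF]
  have key : ∀ p : Fin 8 × Fin 2 × Fin 2 × Fin 2,
      (if (eF p) 2 = x then starState (eF p) * star (starState (Function.update (eF p) 2 y)) else 0)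
      = if (p.2.2.1 = x ∧ (p.1:ℕ) = 4*(p.2.1:ℕ)+2*(x:ℕ)+(p.2.2.2:ℕ)
          ∧ (p.1:ℕ) = 4*(p.2.1:ℕ)+2*(y:ℕ)+(p.2.2.2:ℕ)) then (1/8 : ℂ) else 0 := by
    intro p
    rw [show (if (eF p) 2 = x then starState (eF p) * star (starState (Function.update (eF p) 2 y)) else 0)
      = if p.2.2.1 = x then
          (if (p.1 : ℕ) = 4*(p.2.1:ℕ)+2*(p.2.2.1:ℕ)+(p.2.2.2:ℕ) then ((1/(2*Real.sqrt 2):ℝ):ℂ) else 0) *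
            star (if (p.1 : ℕ) = 4*(p.2.1:ℕ)+2*(y:ℕ)+(p.2.2.2:ℕ) then ((1/(2*Real.sqrt 2):ℝ):ℂ) else 0)
        else 0 from rfl, if_mul_if, amp_sq]
    by_cases hpx : p.2.2.1 = x
    · subst hpx; rfl
    · rw [if_neg (fun hc : _ ∧ _ ∧ _ => hpx hc.1), if_neg (fun hc : _ ∧ _ ∧ _ => hpx hc.1)]
  rw [Finset.sum_congr rfl fun p _ => key p, sum_indicator, count2 x y]
  rw [Matrix.smul_apply, Matrix.one_apply]
  split_ifs <;> simp [Complex.real_smul] <;> norm_num <;> contradiction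

lemma rho3_eq : reduced1 ![8,2,2,2] starState 3 = (((1/2 : ℝ)) : ℂ) • 1 := by
  ext x y
  show (∑ f : ∀ i, Fin (![8,2,2,2] i), if f 3 = x then starState f *
    star (starState (Function.update f 3 y)) else 0) = _
  rw [← Equiv.sum_comp eF]
  have key : ∀ p : Fin 8 × Fin 2 × Fin 2 × Fin 2,
      (if (eF p) 3 = x then starState (eF p) * star (starState (Function.update (eF p) 3 y)) else 0)
      = if (p.2.2.2 = x ∧ (p.1:ℕ) = 4*(p.2.1:ℕ)+2*(p.2.2.1:ℕ)+(x:ℕ)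
          ∧ (p.1:ℕ) = 4*(p.2.1:ℕ)+2*(p.2.2.1:ℕ)+(y:ℕ)) then (1/8 : ℂ) else 0 := by
    intro p
    rw [show (if (eF p) 3 = x then starState (eF p) * star (starState (Function.update (eF p) 3 y)) else 0)
      = if p.2.2.2 = x then
          (if (p.1 : ℕ) = 4*(p.2.1:ℕ)+2*(p.2.2.1:ℕ)+(p.2.2.2:ℕ) then ((1/(2*Real.sqrt 2):ℝ):ℂ) else 0) *
            star (if (p.1 : ℕ) = 4*(p.2.1:ℕ)+2*(p.2.2.1:ℕ)+(y:ℕ) then ((1/(2*Real.sqrt 2):ℝ):ℂ) else 0)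
        else 0 from rfl, if_mul_if, amp_sq]
    by_cases hpx : p.2.2.2 = x
    · subst hpx; rfl
    · rw [if_neg (fun hc : _ ∧ _ ∧ _ => hpx hc.1), if_neg (fun hc : _ ∧ _ ∧ _ => hpx hc.1)]
  rw [Finset.sum_congr rfl fun p _ => key p, sum_indicator, count3 x y]
  rw [Matrix.smul_apply, Matrix.one_apply]
  split_ifs <;> simp [Complex.real_smul] <;> norm_num <;> contradiction

lemma traceRpow_aux {m : Type*} [Fintype m] [DecidableEq m] {A : Matrix m m ℂ}
    (hA : A.IsHermitian) (c : ℝ) (hc : ∀ i, hA.eigenvalues i = c) (q : ℝ) :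
    ∑ i, (hA.eigenvalues i) ^ q = (Fintype.card m : ℝ) * c ^ q := by
  rw [Finset.sum_congr rfl fun i _ => by rw [hc i]]
  rw [Finset.sum_const, nsmul_eq_mul, Finset.card_univ]

lemma rpow_calc (n : ℕ) (hn : 0 < n) (q : ℝ) :
    (n : ℝ) * ((1 / n : ℝ)) ^ q = (n : ℝ) ^ (1 - q) := by
  have h0 : (0:ℝ) < n := by exact_mod_cast hn
  rw [one_div, Real.inv_rpow h0.le, ← Real.rpow_neg h0.le, sub_eq_add_neg,
    Real.rpow_add h0, Real.rpow_one]

lemma final_ineq (q : ℝ) (hq : 2 ≤ q) :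
    1 - (4:ℝ)^(1-q) ≤ (1 - (8:ℝ)^(1-q)) + (1 - (2:ℝ)^(1-q)) := by
  set t := (2:ℝ)^(1-q) with ht
  have ht0 : 0 < t := Real.rpow_pos_of_pos (by norm_num) _
  have ht1 : t ≤ 1 := Real.rpow_le_one_of_one_le_of_nonpos (by norm_num) (by linarith)
  have h4 : (4:ℝ)^(1-q) = t^(2:ℕ) := by
    rw [ht, show (4:ℝ) = (2:ℝ)^((2:ℕ):ℝ) by rw [Real.rpow_natCast]; norm_num,
      ← Real.rpow_mul (by norm_num : (0:ℝ) ≤ 2),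
      mul_comm, Real.rpow_mul (by norm_num : (0:ℝ) ≤ 2), Real.rpow_natCast]
  have h8 : (8:ℝ)^(1-q) = t^(3:ℕ) := by
    rw [ht, show (8:ℝ) = (2:ℝ)^((3:ℕ):ℝ) by rw [Real.rpow_natCast]; norm_num,
      ← Real.rpow_mul (by norm_num : (0:ℝ) ≤ 2),
      mul_comm, Real.rpow_mul (by norm_num : (0:ℝ) ≤ 2), Real.rpow_natCast]
  rw [h4, h8]
  nlinarith [mul_nonneg (sub_nonneg.mpr ht1) (by positivity : (0:ℝ) ≤ 1 + t^2)]

theorem stmt15 (q : ℝ) (hq : 2 ≤ q)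
    (h12 : (reducedS ![8, 2, 2, 2] starState {0, 1}).IsHermitian)
    (hherm : ∀ j, (reduced1 ![8, 2, 2, 2] starState j).IsHermitian) :
    FqEnt (reducedS ![8, 2, 2, 2] starState {0, 1}) h12 q = 1 - (4 : ℝ) ^ (1 - q) ∧
    FqEnt (reduced1 ![8, 2, 2, 2] starState 0) (hherm 0) q = 1 - (8 : ℝ) ^ (1 - q) ∧
    (∀ j : Fin 4, j ≠ 0 →
      FqEnt (reduced1 ![8, 2, 2, 2] starState j) (hherm j) q = 1 - (2 : ℝ) ^ (1 - q)) ∧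
    FqEnt (reducedS ![8, 2, 2, 2] starState {0, 1}) h12 q ≤
      FqEnt (reduced1 ![8, 2, 2, 2] starState 0) (hherm 0) q +
        FqEnt (reduced1 ![8, 2, 2, 2] starState 1) (hherm 1) q := by
  have hq0 : q ≠ 0 := by linarith
  -- eigenvalues of the 12-marginal
  have hP : reducedS ![8,2,2,2] starState {0,1} * reducedS ![8,2,2,2] starState {0,1}
      = (((1/4 : ℝ)) : ℂ) • reducedS ![8,2,2,2] starState {0,1} := by
    rw [rhoS_mul]; norm_num
  have heig := eig_zero_or_of_proj h12 (1/4) hP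
  have hsum : ∑ i, h12.eigenvalues i = 1 := by
    have h := trace_eq_sum_eig h12
    rw [rhoS_trace] at h
    exact_mod_cast h.symm
  have hsum' : ∑ i, h12.eigenvalues i
      = ((Finset.univ.filter fun i => h12.eigenvalues i = 1/4).card : ℝ) * (1/4) := by
    rw [Finset.sum_congr rfl (fun i _ =>
      show h12.eigenvalues i = if h12.eigenvalues i = 1/4 then (1/4:ℝ) else 0 by
        rcases heig i with h | h <;> simp [h]),
      Finset.sum_ite, Finset.sum_const, Finset.sum_const_zero, add_zero, nsmul_eq_mul]
  have hk4 : ((Finset.univ.filter fun i => h12.eigenvalues i = 1/4).card : ℝ) = 4 := by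
    rw [hsum] at hsum'; linarith
  have hT12 : traceRpow _ h12 q = (4:ℝ)^(1-q) := by
    unfold traceRpow
    rw [Finset.sum_congr rfl (fun i _ =>
      show h12.eigenvalues i ^ q = if h12.eigenvalues i = 1/4 then (1/4:ℝ)^q else 0 by
        rcases heig i with h | h
        · rw [h, Real.zero_rpow hq0, if_neg (by norm_num)]
        · rw [h, if_pos rfl]),
      Finset.sum_ite, Finset.sum_const, Finset.sum_const_zero, add_zero, nsmul_eq_mul, hk4]
    have h := rpow_calc 4 (by norm_num) q
    push_cast at h
    exact h
  have hT0 : traceRpow _ (hherm 0) q = (8:ℝ)^(1-q) := by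
    unfold traceRpow
    rw [traceRpow_aux (hherm 0) (1/8)
      (eig_eq_of_smul_one (hherm 0) (1/8) rho0_eq) q,
      show (Fintype.card (Fin (![8,2,2,2] (0 : Fin 4))) : ℝ) = ((8:ℕ):ℝ) from by rw [Fintype.card_fin]; rfl]
    have h := rpow_calc 8 (by norm_num) q
    push_cast at h ⊢
    exact h
  have hT1 : traceRpow _ (hherm 1) q = (2:ℝ)^(1-q) := by
    unfold traceRpow
    rw [traceRpow_aux (hherm 1) (1/2)
      (eig_eq_of_smul_one (hherm 1) (1/2) rho1_eq) q,
      show (Fintype.card (Fin (![8,2,2,2] (1 : Fin 4))) : ℝ) = ((2:ℕ):ℝ) from by rw [Fintype.card_fin]; rfl]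
    have h := rpow_calc 2 (by norm_num) q
    push_cast at h ⊢
    exact h
  have hT2 : traceRpow _ (hherm 2) q = (2:ℝ)^(1-q) := by
    unfold traceRpow
    rw [traceRpow_aux (hherm 2) (1/2)
      (eig_eq_of_smul_one (hherm 2) (1/2) rho2_eq) q,
      show (Fintype.card (Fin (![8,2,2,2] (2 : Fin 4))) : ℝ) = ((2:ℕ):ℝ) from by rw [Fintype.card_fin]; rfl]
    have h := rpow_calc 2 (by norm_num) q
    push_cast at h ⊢
    exact h
  have hT3 : traceRpow _ (hherm 3) q = (2:ℝ)^(1-q) := by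
    unfold traceRpow
    rw [traceRpow_aux (hherm 3) (1/2)
      (eig_eq_of_smul_one (hherm 3) (1/2) rho3_eq) q,
      show (Fintype.card (Fin (![8,2,2,2] (3 : Fin 4))) : ℝ) = ((2:ℕ):ℝ) from by rw [Fintype.card_fin]; rfl]
    have h := rpow_calc 2 (by norm_num) q
    push_cast at h ⊢
    exact h
  have hF12 : FqEnt (reducedS ![8, 2, 2, 2] starState {0, 1}) h12 q = 1 - (4:ℝ)^(1-q) := by
    unfold FqEnt; rw [hT12]
  have hF0 : FqEnt (reduced1 ![8, 2, 2, 2] starState 0) (hherm 0) q = 1 - (8:ℝ)^(1-q) := by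
    unfold FqEnt; rw [hT0]
  have hF1 : FqEnt (reduced1 ![8, 2, 2, 2] starState 1) (hherm 1) q = 1 - (2:ℝ)^(1-q) := by
    unfold FqEnt; rw [hT1]
  have hF2 : FqEnt (reduced1 ![8, 2, 2, 2] starState 2) (hherm 2) q = 1 - (2:ℝ)^(1-q) := by
    unfold FqEnt; rw [hT2]
  have hF3 : FqEnt (reduced1 ![8, 2, 2, 2] starState 3) (hherm 3) q = 1 - (2:ℝ)^(1-q) := by
    unfold FqEnt; rw [hT3]
  refine ⟨hF12, hF0, ?_, ?_⟩
  · intro j hj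
    fin_cases j
    · exact absurd rfl hj
    · exact hF1
    · exact hF2
    · exact hF3
  · rw [hF12, hF0, hF1]
    exact final_ineq q hq
end
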